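/- arXiv:2002.08520 — 3 statements merged into one kernel-verified Lean document; each statement's English description precedes it below -/
import Mathlib

section
/- Let P and Q be two polygons (2-dimensional polytopes) in a plane H with f = P ∩ Q a common edge, and suppose Q is a triangle, Q = conv(f ∪ {v}) with v on the opposite side of aff(f) from P. Then closure(conv(P ∪ Q) \ P) is a pyramid over an edge-containing polygon with apex v; in particular, if every vertex of P visible from v is an endpoint of f, then P ⊂_Δ conv(P ∪ {v}) is a pyramidal extension with Δ = conv(f ∪ {v}). -/
open Set

noncomputable section

/-- A polytope: the convex hull of a finite set of points. -/
def IsPolytope {E : Type*} [AddCommGroup E] [Module ℝ E] (P : Set E) : Prop :=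
  ∃ s : Finset E, P = convexHull ℝ (s : Set E)

/-- The dimension of a set: the dimension of its affine hull. -/
def polyDim {E : Type*} [AddCommGroup E] [Module ℝ E] (P : Set E) : ℕ :=
  Module.finrank ℝ (affineSpan ℝ P).direction

/-- A facet: an exposed face of dimension one less. -/
def IsFacet {E : Type*} [NormedAddCommGroup E] [NormedSpace ℝ E] (F P : Set E) : Prop :=
  IsExposed ℝ P F ∧ polyDim F + 1 = polyDim P

/-- `Δ` is a pyramid with base the polytope `B` and apex `v`. -/
def IsPyramidOver {E : Type*} [AddCommGroup E] [Module ℝ E]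
    (Δ B : Set E) (v : E) : Prop :=
  IsPolytope B ∧ v ∉ affineSpan ℝ B ∧ Δ = convexHull ℝ (B ∪ {v})

/-- Pyramidal extension: `closure (Q \ P)` is a pyramid whose intersection with `P`
is a facet of it. -/
def PyramidalExt {E : Type*} [NormedAddCommGroup E] [NormedSpace ℝ E]
    (P Q : Set E) : Prop :=
  IsPolytope P ∧ IsPolytope Q ∧ P ⊆ Q ∧
    (∃ B v, IsPyramidOver (closure (Q \ P)) B v) ∧
    IsFacet (closure (Q \ P) ∩ P) (closure (Q \ P))

end

/-- A facet `F` of `P` is visible from the external point `v`: `v` lies strictly on the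
other side of the supporting hyperplane of `F`. -/
def VisibleFacet {E : Type*} [NormedAddCommGroup E] [NormedSpace ℝ E]
    (P F : Set E) (v : E) : Prop :=
  IsFacet F P ∧ ∃ φ : E →ᵃ[ℝ] ℝ, (∀ x ∈ P, φ x ≤ 0) ∧ (∀ x ∈ F, φ x = 0) ∧ 0 < φ v

/-- Crossing lemma: if `p` lies strictly between `a, b ∈ P` and some point `z` of the open
segment `(v,a)` lies in `P`, then the open segment `(v,p)` meets `P`. -/
lemma crossing_lemma {E : Type*} [AddCommGroup E] [Module ℝ E] {P : Set E}
    (hP : Convex ℝ P) {v a b p z : E} (hz : z ∈ P) (hb : b ∈ P)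
    (hp : p ∈ openSegment ℝ a b) (hza : z ∈ openSegment ℝ v a) :
    (openSegment ℝ v p ∩ P).Nonempty := by
  obtain ⟨σ', σ, hσ'pos, hσpos, hσsum, hpe⟩ := hp
  obtain ⟨τ', τ, hτ'pos, hτpos, hτsum, hze⟩ := hza
  have hσ' : σ' = 1 - σ := by linarith
  have hτ' : τ' = 1 - τ := by linarith
  subst hσ' hτ'
  have hσ1 : σ < 1 := by linarith
  have hτ1 : τ < 1 := by linarith
  have hdpos : (0:ℝ) < 1 - σ * (1 - τ) := by nlinarith
  have hh : (1 - σ * (1 - τ)) * (1 - σ * (1 - τ))⁻¹ = 1 := mul_inv_cancel₀ hdpos.ne'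
  have hα0 : 0 < τ / (1 - σ * (1 - τ)) := by positivity
  have hα1 : τ / (1 - σ * (1 - τ)) < 1 := by
    rw [div_lt_one hdpos]; nlinarith
  have hβ0 : (0:ℝ) ≤ σ * τ / (1 - σ * (1 - τ)) := by positivity
  have hβ1 : σ * τ / (1 - σ * (1 - τ)) ≤ 1 := by
    rw [div_le_one hdpos]; nlinarith
  refine ⟨(1 - τ / (1 - σ * (1 - τ))) • v + (τ / (1 - σ * (1 - τ))) • p,
    ⟨1 - τ / (1 - σ * (1 - τ)), τ / (1 - σ * (1 - τ)), by linarith, hα0, by ring, rfl⟩, ?_⟩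
  have hkey : (1 - τ / (1 - σ * (1 - τ))) • v + (τ / (1 - σ * (1 - τ))) • p
      = (1 - σ * τ / (1 - σ * (1 - τ))) • z + (σ * τ / (1 - σ * (1 - τ))) • b := by
    rw [← hpe, ← hze]
    match_scalars
    · linear_combination (-τ) * hh
    · linear_combination τ * hh
    · ring
  rw [hkey]
  exact hP hz hb (by linarith) hβ0 (by ring)

/-- If every extreme point of `P` that is visible from `v` lies in the convex set `f`,
then every point of `P` visible from `v` lies in `f`. -/
lemma visible_in_f {E : Type*} [AddCommGroup E] [Module ℝ E] {P f : Set E} {v : E}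
    (hPconv : Convex ℝ P) (hfconv : Convex ℝ f)
    (hEfin : (P.extremePoints ℝ).Finite)
    (hPE : convexHull ℝ (P.extremePoints ℝ) = P)
    (hvis : ∀ w ∈ P.extremePoints ℝ, openSegment ℝ v w ∩ P = ∅ → w ∈ f)
    {p : E} (hpP : p ∈ P) (hvp : openSegment ℝ v p ∩ P = ∅) : p ∈ f := by
  have hp' : p ∈ convexHull ℝ (↑hEfin.toFinset : Set E) := by
    rw [hEfin.coe_toFinset, hPE]; exact hpP
  rw [Finset.convexHull_eq] at hp'
  obtain ⟨w, hw0, hw1, hwc⟩ := hp'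
  classical
  set t : Finset E := {i ∈ hEfin.toFinset | w i ≠ 0} with ht
  have hwc' : t.centerMass w id = p := by
    rw [ht, Finset.centerMass_filter_ne_zero, hwc]
  have hsum : ∑ i ∈ t, w i = 1 := by
    rw [ht, Finset.sum_filter_ne_zero]; exact hw1
  have hpos : ∀ i ∈ t, 0 < w i := by
    intro i hi
    rw [ht, Finset.mem_filter] at hi
    exact lt_of_le_of_ne (hw0 i hi.1) (Ne.symm hi.2)
  have htE : ∀ i ∈ t, i ∈ P.extremePoints ℝ := by
    intro i hi
    rw [ht, Finset.mem_filter, hEfin.mem_toFinset] at hi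
    exact hi.1
  have hall : ∀ e ∈ t, e ∈ f := by
    intro e he
    apply hvis e (htE e he)
    by_contra hne
    obtain ⟨z, hzseg, hzP⟩ := Set.nonempty_iff_ne_empty.2 hne
    set c : ℝ := ∑ i ∈ t.erase e, w i with hc
    have hwec : w e + c = 1 := by rw [hc, Finset.add_sum_erase _ _ he]; exact hsum
    have hc0 : 0 ≤ c := Finset.sum_nonneg fun i hi => (hpos i (Finset.mem_of_mem_erase hi)).le
    rcases eq_or_lt_of_le hc0 with hceq | hcpos
    · have herase : t.erase e = ∅ := by
        by_contra hh
        obtain ⟨j, hj⟩ := Finset.nonempty_iff_ne_empty.2 hh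
        have hj' := hpos j (Finset.mem_of_mem_erase hj)
        have : c > 0 := Finset.sum_pos' (fun i hi => (hpos i (Finset.mem_of_mem_erase hi)).le)
          ⟨j, hj, hj'⟩
        linarith
      have hte : t = {e} := by
        rcases (Finset.erase_eq_empty_iff t e).1 herase with h | h
        · exact absurd (h ▸ he) (Finset.notMem_empty e)
        · exact h
      have hpe : p = e := by
        rw [← hwc', hte, Finset.centerMass, Finset.sum_singleton, Finset.sum_singleton,
          smul_smul, inv_mul_cancel₀ (hpos e he).ne', one_smul]
        rfl
      rw [← hpe] at hzseg
      exact absurd (Set.mem_inter hzseg hzP) (by rw [hvp]; exact Set.notMem_empty z)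
    · set q : E := (t.erase e).centerMass w id with hq
      have hqP : q ∈ P := by
        rw [← hPE, hq]
        exact Finset.centerMass_mem_convexHull _
          (fun i hi => (hpos i (Finset.mem_of_mem_erase hi)).le)
          (by rwa [← hc]) (fun i hi => htE i (Finset.mem_of_mem_erase hi))
      have hdecomp : p = w e • e + c • q := by
        rw [← hwc', Finset.centerMass, hsum, inv_one, one_smul,
          ← Finset.add_sum_erase _ _ he, hq, Finset.centerMass, smul_smul, ← hc,
          mul_inv_cancel₀ hcpos.ne', one_smul]
        rfl
      have hpseg : p ∈ openSegment ℝ e q :=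
        ⟨w e, c, hpos e he, hcpos, hwec, hdecomp.symm⟩
      obtain ⟨u, hu⟩ := crossing_lemma hPconv hzP hqP hpseg hzseg
      rw [hvp] at hu
      exact hu
  have hpf : p ∈ convexHull ℝ f := by
    rw [← hwc']
    exact Finset.centerMass_mem_convexHull _ (fun i hi => (hpos i hi).le)
      (by rw [hsum]; norm_num) (fun i hi => hall i hi)
  rwa [hfconv.convexHull_eq] at hpf

set_option maxHeartbeats 1000000 in
theorem stmt9 (P Q f : Set (EuclideanSpace ℝ (Fin 2))) (v : EuclideanSpace ℝ (Fin 2))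
    (hP : IsPolytope P) (hdim : polyDim P = 2)
    (hedge : IsFacet f P)
    (hQ : Q = convexHull ℝ (f ∪ {v}))
    (hf : f = P ∩ Q)
    -- v is on the opposite side of aff(f) from P
    (hside : ∃ φ : EuclideanSpace ℝ (Fin 2) →ᵃ[ℝ] ℝ,
      (∀ x ∈ P, φ x ≤ 0) ∧ (∀ x ∈ f, φ x = 0) ∧ 0 < φ v)
    -- every vertex of P visible from v is an endpoint of f
    (hvis : ∀ w ∈ Set.extremePoints ℝ P, openSegment ℝ v w ∩ P = ∅ → w ∈ f) :
    closure (convexHull ℝ (P ∪ {v}) \ P) = convexHull ℝ (f ∪ {v}) ∧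
      convexHull ℝ (f ∪ {v}) ∩ P = f ∧
      IsFacet f (convexHull ℝ (f ∪ {v})) ∧
      PyramidalExt P (convexHull ℝ (P ∪ {v})) := by
  classical
  obtain ⟨s, hPs⟩ := hP
  obtain ⟨φ, hφP, hφf, hφv⟩ := hside
  set Q' : Set (EuclideanSpace ℝ (Fin 2)) := convexHull ℝ (f ∪ {v}) with hQ'
  have hPconv : Convex ℝ P := hPs ▸ convex_convexHull ℝ _
  have hPcompact : IsCompact P := hPs ▸ s.finite_toSet.isCompact_convexHull (𝕜 := ℝ)
  have hPclosed : IsClosed P := hPcompact.isClosed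
  have hfP : f ⊆ P := by rw [hf]; exact inter_subset_left
  have hfconv : Convex ℝ f := hedge.1.convex hPconv
  have hfclosed : IsClosed f := hedge.1.isClosed hPclosed
  have hfcompact : IsCompact f := hPcompact.of_isClosed_subset hfclosed hfP
  have hdimf : polyDim f = 1 := by have h := hedge.2; omega
  have hfne : f.Nonempty := by
    rw [Set.nonempty_iff_ne_empty]
    rintro rfl
    rw [polyDim, AffineSubspace.span_empty, AffineSubspace.direction_bot] at hdimf
    simp at hdimf
  have hPne : P.Nonempty := hfne.mono hfP
  have hvQ' : v ∈ Q' := subset_convexHull ℝ _ (Or.inr rfl)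
  have hfQ' : f ⊆ Q' := subset_union_left.trans (subset_convexHull ℝ _)
  have hvP : v ∉ P := fun h => absurd (hφP v h) (not_le.2 hφv)
  -- φ is nonnegative on Q'
  have hconvφ : Convex ℝ {y | 0 ≤ φ y} := by
    intro y hy z hz a b ha hb hab
    simp only [mem_setOf_eq] at *
    rw [Convex.combo_affine_apply hab, smul_eq_mul, smul_eq_mul]
    nlinarith
  have hφQ : ∀ x ∈ Q', 0 ≤ φ x := by
    intro x hx
    refine convexHull_min ?_ hconvφ hx
    rintro y (hy | rfl)
    · exact (hφf y hy).ge
    · exact hφv.le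
  -- decomposition of Q' as a join
  have hQ'join : Q' = convexJoin ℝ {v} f := by
    rw [hQ', Set.union_singleton, convexHull_insert hfne, hfconv.convexHull_eq]
  have hzero_mem : ∀ x ∈ Q', φ x = 0 → x ∈ f := by
    intro x hx hx0
    rw [hQ'join, mem_convexJoin] at hx
    obtain ⟨a, ha, b, hb, hseg⟩ := hx
    rw [mem_singleton_iff] at ha
    rw [ha] at hseg
    obtain ⟨c1, c2, hc1, hc2, hc12, hcomb⟩ := hseg
    have hφx : φ x = c1 * φ v + c2 * φ b := by
      rw [← hcomb, Convex.combo_affine_apply hc12, smul_eq_mul, smul_eq_mul]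
    have hb0 : φ b = 0 := hφf b hb
    have hc10 : c1 = 0 := by nlinarith
    have hxb : x = b := by
      rw [← hcomb, hc10, zero_smul, zero_add, show c2 = 1 by linarith, one_smul]
    rwa [hxb]
  -- extreme points of P
  have hEP : P.extremePoints ℝ ⊆ ↑s := by rw [hPs]; exact extremePoints_convexHull_subset
  have hEfin : (P.extremePoints ℝ).Finite := s.finite_toSet.subset hEP
  have hPE : convexHull ℝ (P.extremePoints ℝ) = P := by
    have hKM := closure_convexHull_extremePoints hPcompact hPconv
    have hcl2 : IsClosed (convexHull ℝ (P.extremePoints ℝ)) :=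
      (hEfin.isCompact_convexHull (𝕜 := ℝ)).isClosed
    rw [← hcl2.closure_eq]
    exact hKM
  have key : ∀ p ∈ P, openSegment ℝ v p ∩ P = ∅ → p ∈ f :=
    fun p hp h => visible_in_f hPconv hfconv hEfin hPE hvis hp h
  -- main decomposition
  have hmain : convexHull ℝ (P ∪ {v}) = P ∪ Q' := by
    apply Subset.antisymm
    · intro x hx
      rw [Set.union_singleton, convexHull_insert hPne, hPconv.convexHull_eq,
        mem_convexJoin] at hx
      obtain ⟨a, ha, y, hy, hseg⟩ := hx
      rw [mem_singleton_iff] at ha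
      rw [ha] at hseg
      by_cases hxP : x ∈ P
      · exact Or.inl hxP
      right
      obtain ⟨t', t, ht'0, ht0, hts, hxe⟩ := hseg
      have ht' : t' = 1 - t := by linarith
      subst ht'
      rcases eq_or_lt_of_le ht0 with ht0' | htpos
      · have hxv : x = v := by rw [← hxe, ← ht0']; simp
        rw [hxv]; exact hvQ'
      have ht1 : t < 1 := by
        rcases lt_or_eq_of_le (show t ≤ 1 by linarith) with h | h
        · exact h
        · exfalso; apply hxP; rw [← hxe, h]; simpa using hy
      set g : ℝ → EuclideanSpace ℝ (Fin 2) := fun r => (1 - r) • v + r • y with hg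
      have hgc : Continuous g := by fun_prop
      have hg0 : g 0 = v := by simp [hg]
      have haff : ∀ c1 c2 r1 r2 : ℝ, c1 + c2 = 1 →
          c1 • g r1 + c2 • g r2 = g (c1 * r1 + c2 * r2) := by
        intro c1 c2 r1 r2 h
        simp only [hg]
        match_scalars
        · linear_combination h
        · ring
      have hgt : g t = x := by simp only [hg]; exact hxe
      set S : Set ℝ := Icc t 1 ∩ g ⁻¹' P with hS
      have hS1 : (1:ℝ) ∈ S := ⟨⟨ht1.le, le_refl 1⟩, by simp only [mem_preimage, hg]; simpa using hy⟩
      have hSne : S.Nonempty := ⟨1, hS1⟩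
      have hSbdd : BddBelow S := ⟨t, fun r hr => hr.1.1⟩
      have hSclosed : IsClosed S := isClosed_Icc.inter (hPclosed.preimage hgc)
      set r0 : ℝ := sInf S with hr0
      have hr0S : r0 ∈ S := hSclosed.csInf_mem hSne hSbdd
      have hp0P : g r0 ∈ P := hr0S.2
      have htr0 : t < r0 := by
        rcases lt_or_eq_of_le hr0S.1.1 with h | h
        · exact h
        · exfalso; apply hxP; rw [← h, hgt] at hp0P; exact hp0P
      have hr0pos : 0 < r0 := lt_of_le_of_lt htpos.le htr0
      have hr01 : r0 ≤ 1 := hr0S.1.2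
      have hvis0 : openSegment ℝ v (g r0) ∩ P = ∅ := by
        rw [Set.eq_empty_iff_forall_notMem]
        rintro u ⟨huseg, huP⟩
        obtain ⟨a1, b1, ha1, hb1, hab1, hue⟩ := huseg
        have ha1' : a1 = 1 - b1 := by linarith
        subst ha1'
        have hb11 : b1 < 1 := by linarith
        have hur : u = g (b1 * r0) := by
          rw [← hue, ← hg0, haff _ _ _ _ (by ring : (1 - b1) + b1 = 1),
            show (1 - b1) * 0 + b1 * r0 = b1 * r0 by ring]
        have hbr0 : b1 * r0 < r0 := by nlinarith
        rcases lt_or_ge (b1 * r0) t with hlt | hge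
        · -- x = g t lies between g (b1*r0) ∈ P and g r0 ∈ P
          apply hxP
          have hD : (0:ℝ) < r0 - b1 * r0 := by linarith
          have hcsum : (r0 - t) / (r0 - b1 * r0) + (t - b1 * r0) / (r0 - b1 * r0) = 1 := by
            field_simp
            ring
          have harg : (r0 - t) / (r0 - b1 * r0) * (b1 * r0)
              + (t - b1 * r0) / (r0 - b1 * r0) * r0 = t := by
            field_simp
            ring
          have hxcomb : x = ((r0 - t) / (r0 - b1 * r0)) • g (b1 * r0)
              + ((t - b1 * r0) / (r0 - b1 * r0)) • g r0 := by
            rw [haff _ _ _ _ hcsum, harg, hgt]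
          rw [hxcomb]
          exact hPconv (hur ▸ huP) hp0P
            (div_nonneg (by linarith) hD.le) (div_nonneg (by linarith) hD.le) hcsum
        · have hmem : b1 * r0 ∈ S := ⟨⟨hge, by nlinarith⟩, by rw [mem_preimage, ← hur]; exact huP⟩
          have := csInf_le hSbdd hmem
          rw [← hr0] at this
          linarith
      have hp0f : g r0 ∈ f := key _ hp0P hvis0
      have h1 : 0 ≤ 1 - t / r0 := by
        have : t / r0 ≤ 1 := by rw [div_le_one hr0pos]; linarith
        linarith
      have h2 : 0 ≤ t / r0 := by positivity
      have h3 : (1 - t / r0) + t / r0 = 1 := by ring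
      have h4 : (1 - t / r0) • v + (t / r0) • g r0 = x := by
        rw [← hg0, haff _ _ _ _ h3,
          show (1 - t / r0) * 0 + t / r0 * r0 = t by
            rw [mul_zero, zero_add, div_mul_cancel₀ _ hr0pos.ne'], hgt]
      have hvm : v ∈ f ∪ {v} := Set.mem_union_right _ (Set.mem_singleton v)
      have hpm : g r0 ∈ f ∪ {v} := Set.mem_union_left _ hp0f
      exact segment_subset_convexHull hvm hpm ⟨1 - t / r0, t / r0, h1, h2, h3, h4⟩
    · apply union_subset
      · exact subset_union_left.trans (subset_convexHull ℝ _)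
      · exact convexHull_mono (union_subset_union_left _ hfP)
  -- f is a polytope
  have hfpoly : IsPolytope f := by
    have hEf : f.extremePoints ℝ ⊆ P.extremePoints ℝ :=
      (hedge.1.isExtreme).extremePoints_subset_extremePoints
    have hEffin : (f.extremePoints ℝ).Finite := hEfin.subset hEf
    refine ⟨hEffin.toFinset, ?_⟩
    rw [hEffin.coe_toFinset]
    have hKM := closure_convexHull_extremePoints hfcompact hfconv
    have hcl2 : IsClosed (convexHull ℝ (f.extremePoints ℝ)) :=
      (hEffin.isCompact_convexHull (𝕜 := ℝ)).isClosed
    rw [← hcl2.closure_eq]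
    exact hKM.symm
  obtain ⟨tf, htf⟩ := hfpoly
  have hQ'poly : IsPolytope Q' := by
    refine ⟨insert v tf, ?_⟩
    rw [hQ', htf, Finset.coe_insert, ← Set.union_singleton,
      convexHull_convexHull_union_left]
  have hQ'closed : IsClosed Q' := by
    obtain ⟨t0, ht0⟩ := hQ'poly
    rw [ht0]
    exact (t0.finite_toSet.isCompact_convexHull (𝕜 := ℝ)).isClosed
  have hQ'conv : Convex ℝ Q' := convex_convexHull ℝ _
  -- the closure identity
  have hcl : closure (convexHull ℝ (P ∪ {v}) \ P) = Q' := by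
    rw [hmain, union_diff_left]
    apply Subset.antisymm
    · exact closure_minimal diff_subset hQ'closed
    · intro q hq
      have hmem : ∀ n : ℕ, (1 - (1:ℝ)/(n+1)) • q + ((1:ℝ)/(n+1)) • v ∈ Q' \ P := by
        intro n
        have hn0 : (0:ℝ) < 1/(n+1) := by positivity
        have hn1 : (1:ℝ)/(n+1) ≤ 1 := by
          rw [div_le_one (by positivity)]
          have : (0:ℝ) ≤ n := Nat.cast_nonneg n
          linarith
        constructor
        · exact hQ'conv hq hvQ' (by linarith) hn0.le (by ring)
        · intro hP'
          have h1 := hφP _ hP'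
          have h2 : φ ((1 - 1/((n:ℝ)+1)) • q + (1/((n:ℝ)+1)) • v)
              = (1 - 1/((n:ℝ)+1)) * φ q + (1/((n:ℝ)+1)) * φ v := by
            rw [Convex.combo_affine_apply (by ring), smul_eq_mul, smul_eq_mul]
          have hq0 : 0 ≤ φ q := hφQ q hq
          nlinarith
      have htend : Filter.Tendsto (fun n : ℕ => (1 - (1:ℝ)/(n+1)) • q + ((1:ℝ)/(n+1)) • v)
          Filter.atTop (nhds q) := by
        have hc : Continuous fun c : ℝ => (1 - c) • q + c • v := by fun_prop
        have h0 : (1 - (0:ℝ)) • q + (0:ℝ) • v = q := by simp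
        have := (hc.tendsto 0).comp tendsto_one_div_add_atTop_nhds_zero_nat
        rw [h0] at this
        exact this
      exact mem_closure_of_tendsto htend (Filter.Eventually.of_forall hmem)
  -- intersection identity
  have hQiP : Q' ∩ P = f := by
    rw [← hQ, inter_comm]
    exact hf.symm
  -- v is outside the affine span of f
  have hvaff : v ∉ affineSpan ℝ f := by
    intro hv
    have himg : φ v ∈ (affineSpan ℝ f).map φ := AffineSubspace.mem_map_of_mem φ hv
    rw [AffineSubspace.map_span] at himg
    have hsub : φ '' f ⊆ {(0:ℝ)} := by
      rintro r ⟨x, hx, rfl⟩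
      exact hφf x hx
    have h0 : φ v ∈ affineSpan ℝ ({(0:ℝ)} : Set ℝ) := affineSpan_mono ℝ hsub himg
    rw [AffineSubspace.mem_affineSpan_singleton] at h0
    rw [h0] at hφv
    exact lt_irrefl 0 hφv
  -- the linear part of φ
  have hlin : ∀ z, φ.linear z = φ z - φ 0 := by
    intro z
    have := AffineMap.decomp φ
    have hz := congrFun this z
    simp only [Pi.add_apply, Function.const_apply] at hz
    linarith [hz]
  -- f is a facet of Q'
  have hfacetQ : IsFacet f Q' := by
    constructor
    · intro _
      refine ⟨-(LinearMap.toContinuousLinearMap φ.linear), ?_⟩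
      ext x
      simp only [mem_setOf_eq, ContinuousLinearMap.neg_apply,
        LinearMap.coe_toContinuousLinearMap', neg_le_neg_iff]
      constructor
      · intro hxf
        refine ⟨hfQ' hxf, ?_⟩
        intro y hy
        rw [hlin, hlin]
        have hx0 : φ x = 0 := hφf x hxf
        have hy0 : 0 ≤ φ y := hφQ y hy
        linarith
      · rintro ⟨hxQ, hmax⟩
        obtain ⟨y0, hy0⟩ := hfne
        have h1 := hmax y0 (hfQ' hy0)
        rw [hlin, hlin] at h1
        have h2 : φ y0 = 0 := hφf y0 hy0
        have hx0 : φ x = 0 := le_antisymm (by linarith) (hφQ x hxQ)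
        exact hzero_mem x hxQ hx0
    · rw [hdimf]
      have hQdim : polyDim Q' = 2 := by
        rw [polyDim, hQ', affineSpan_convexHull]
        obtain ⟨w0, hw0⟩ := hfne
        set A : AffineSubspace ℝ (EuclideanSpace ℝ (Fin 2)) := affineSpan ℝ (f ∪ {v}) with hA
        have hw0A : w0 ∈ A := mem_affineSpan ℝ (Or.inl hw0)
        have hvA : v ∈ A := mem_affineSpan ℝ (Or.inr rfl)
        have hu : v - w0 ∈ A.direction := by
          have := AffineSubspace.vsub_mem_direction hvA hw0A
          simpa [vsub_eq_sub] using this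
        have hD : (affineSpan ℝ f).direction ≤ A.direction :=
          AffineSubspace.direction_le (affineSpan_mono ℝ subset_union_left)
        have huD : v - w0 ∉ (affineSpan ℝ f).direction := by
          intro h
          have hw0f : w0 ∈ affineSpan ℝ f := mem_affineSpan ℝ hw0
          have hvf := AffineSubspace.vadd_mem_of_mem_direction h hw0f
          rw [vadd_eq_add, sub_add_cancel] at hvf
          exact hvaff hvf
        have hlt : (affineSpan ℝ f).direction <
            (affineSpan ℝ f).direction ⊔ Submodule.span ℝ {v - w0} :=
          lt_of_le_of_ne le_sup_left (fun hEq => huD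
            (hEq ▸ Submodule.mem_sup_right (Submodule.mem_span_singleton_self _)))
        have h1 := Submodule.finrank_lt_finrank_of_lt hlt
        rw [show Module.finrank ℝ (affineSpan ℝ f).direction = 1 from hdimf] at h1
        have hle : (affineSpan ℝ f).direction ⊔ Submodule.span ℝ {v - w0} ≤ A.direction :=
          sup_le hD (Submodule.span_le.2 (by simpa using hu))
        have h2 := Submodule.finrank_mono hle
        have h3 : Module.finrank ℝ A.direction ≤ 2 := by
          have h4 := Submodule.finrank_le A.direction
          rwa [finrank_euclideanSpace_fin] at h4
        omega
      omega
  refine ⟨hcl, hQiP, hfacetQ, ⟨s, hPs⟩, ?_, ?_, ?_, ?_⟩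
  · exact ⟨insert v s, by
      rw [hPs, convexHull_convexHull_union_left, Set.union_singleton, Finset.coe_insert]⟩
  · exact subset_union_left.trans (subset_convexHull ℝ _)
  · exact ⟨f, v, by rw [hcl]; exact ⟨⟨tf, htf⟩, hvaff, hQ'⟩⟩
  · rw [hcl, hQiP]; exact hfacetQ
end

section
/- Let P be a convex polygon in ℝ² and v ∉ P a point such that exactly one edge e of P is visible from v. Then conv(P ∪ {v}) is a pyramidal extension of P: closure(conv(P ∪ {v}) \ P) is the triangle conv(e ∪ {v}), whose intersection with P is the edge e. -/
open Set

namespace Stmt10Aux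

open scoped RealInnerProductSpace
open Filter Topology

abbrev E2 := EuclideanSpace ℝ (Fin 2)

/-- the unit functional in direction angle `a` -/
noncomputable def Lf (a : ℝ) : E2 →L[ℝ] ℝ :=
  Real.cos a • EuclideanSpace.proj 0 + Real.sin a • EuclideanSpace.proj 1

lemma Lf_apply (a : ℝ) (z : E2) : Lf a z = Real.cos a * z 0 + Real.sin a * z 1 := by
  simp [Lf]

/-- the unit vector at angle `a` -/
noncomputable def nv (a : ℝ) : E2 := EuclideanSpace.single 0 (Real.cos a) + EuclideanSpace.single 1 (Real.sin a)

lemma Lf_nv (a : ℝ) : Lf a (nv a) = 1 := by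
  simp [Lf_apply, nv, EuclideanSpace.single_apply]
  nlinarith [Real.sin_sq_add_cos_sq a]

lemma exists_angle (c s : ℝ) (h : c ^ 2 + s ^ 2 = 1) :
    ∃ a : ℝ, Real.cos a = c ∧ Real.sin a = s := by
  have hz : (Complex.mk c s) ≠ 0 := by
    intro h0
    rw [Complex.ext_iff] at h0
    simp only [Complex.zero_re, Complex.zero_im] at h0
    rw [h0.1, h0.2] at h
    norm_num at h
  have habs : ‖Complex.mk c s‖ = 1 := by
    rw [Complex.norm_def, Complex.normSq_mk]
    have h1 : c * c + s * s = 1 := by nlinarith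
    rw [h1, Real.sqrt_one]
  refine ⟨Complex.arg (Complex.mk c s), ?_, ?_⟩
  · rw [Complex.cos_arg hz, habs]; simp
  · rw [Complex.sin_arg, habs]; simp

lemma finrank_E2 : Module.finrank ℝ E2 = 2 := by
  simp [finrank_euclideanSpace]

lemma ker_dim_le (L : E2 →L[ℝ] ℝ) (z : E2) (hz : L z ≠ 0) :
    Module.finrank ℝ (LinearMap.ker (L : E2 →ₗ[ℝ] ℝ)) ≤ 1 := by
  have h1 : LinearMap.ker (L : E2 →ₗ[ℝ] ℝ) < ⊤ := by
    rw [lt_top_iff_ne_top]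
    intro h
    apply hz
    have hzmem : z ∈ LinearMap.ker (L : E2 →ₗ[ℝ] ℝ) := by rw [h]; exact Submodule.mem_top
    simpa [LinearMap.mem_ker] using hzmem
  have := Submodule.finrank_lt h1.ne
  rw [finrank_E2] at this
  omega

lemma dim_le_one (s0 : Finset E2) (L : E2 →L[ℝ] ℝ) (z : E2) (hz : L z ≠ 0) (w : E2)
    (h : ∀ q ∈ s0, L q = L w) : polyDim (convexHull ℝ (s0 : Set E2)) ≤ 1 := by
  set K := LinearMap.ker (L : E2 →ₗ[ℝ] ℝ) with hK
  have hsub : (s0 : Set E2) ⊆ (AffineSubspace.mk' w K : Set E2) := by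
    intro q hq
    rw [SetLike.mem_coe, AffineSubspace.mem_mk']
    simp only [hK, LinearMap.mem_ker, vsub_eq_sub, map_sub, ContinuousLinearMap.coe_coe]
    rw [h q (Finset.mem_coe.1 hq)]
    ring
  have hconv : convexHull ℝ (s0 : Set E2) ⊆ (AffineSubspace.mk' w K : Set E2) :=
    convexHull_min hsub (AffineSubspace.mk' w K).convex
  have hle : affineSpan ℝ (convexHull ℝ (s0 : Set E2)) ≤ AffineSubspace.mk' w K :=
    affineSpan_le.2 hconv
  have hdir := AffineSubspace.direction_le hle
  rw [AffineSubspace.direction_mk'] at hdir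
  have hmono := Submodule.finrank_mono hdir
  exact le_trans hmono (ker_dim_le L z hz)

lemma facet_of_two (s0 : Finset E2) (hPdim : polyDim (convexHull ℝ (s0 : Set E2)) = 2)
    (L : E2 →L[ℝ] ℝ) (z : E2) (hz : L z ≠ 0)
    (q1 q2 : E2) (hq1 : q1 ∈ s0) (hq2 : q2 ∈ s0) (hne : q1 ≠ q2)
    (hmax : ∀ q ∈ s0, L q ≤ L q1) (heq : L q2 = L q1) :
    (∀ y ∈ convexHull ℝ (s0 : Set E2), L y ≤ L q1) ∧
      IsFacet {y ∈ convexHull ℝ (s0 : Set E2) | L y = L q1} (convexHull ℝ (s0 : Set E2)) := by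
  set P := convexHull ℝ (s0 : Set E2) with hP
  have hub : ∀ y ∈ P, L y ≤ L q1 := by
    intro y hy
    have hsub : P ⊆ {y | L y ≤ L q1} :=
      convexHull_min (fun q hq => hmax q (Finset.mem_coe.1 hq))
        (convex_halfSpace_le ⟨map_add L, map_smul L⟩ (L q1))
    exact hsub hy
  have hq1P : q1 ∈ P := subset_convexHull ℝ _ (Finset.mem_coe.2 hq1)
  have hq2P : q2 ∈ P := subset_convexHull ℝ _ (Finset.mem_coe.2 hq2)
  have hFrep : {y ∈ P | L y = L q1} = {y ∈ P | ∀ w ∈ P, L w ≤ L y} := by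
    ext y
    constructor
    · rintro ⟨hyP, hyL⟩
      exact ⟨hyP, fun w hw => hyL ▸ hub w hw⟩
    · rintro ⟨hyP, hyL⟩
      exact ⟨hyP, le_antisymm (hub y hyP) (hyL q1 hq1P)⟩
  have hexp : IsExposed ℝ P {y ∈ P | L y = L q1} := fun _ => ⟨L, hFrep⟩
  have hq1F : q1 ∈ {y ∈ P | L y = L q1} := ⟨hq1P, rfl⟩
  have hq2F : q2 ∈ {y ∈ P | L y = L q1} := ⟨hq2P, heq⟩
  have hdF : polyDim {y ∈ P | L y = L q1} = 1 := by
    apply le_antisymm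
    · have hvs : vectorSpan ℝ {y ∈ P | L y = L q1} ≤ LinearMap.ker (L : E2 →ₗ[ℝ] ℝ) := by
        rw [vectorSpan_def]
        refine Submodule.span_le.2 ?_
        rintro _ ⟨y, hy, w, hw, rfl⟩
        simp only [SetLike.mem_coe, LinearMap.mem_ker, vsub_eq_sub, map_sub,
          ContinuousLinearMap.coe_coe]
        rw [hy.2, hw.2]; ring
      have h1 : polyDim {y ∈ P | L y = L q1}
          = Module.finrank ℝ (vectorSpan ℝ {y ∈ P | L y = L q1}) := by
        rw [polyDim, direction_affineSpan]
      rw [h1]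
      exact le_trans (Submodule.finrank_mono hvs) (ker_dim_le L z hz)
    · have hsp : (ℝ ∙ (q2 - q1)) ≤ vectorSpan ℝ {y ∈ P | L y = L q1} := by
        rw [Submodule.span_singleton_le_iff_mem]
        have := vsub_mem_vectorSpan ℝ hq2F hq1F
        simpa [vsub_eq_sub] using this
      have hmono := Submodule.finrank_mono hsp
      rw [finrank_span_singleton (sub_ne_zero.2 (Ne.symm hne))] at hmono
      rw [polyDim, direction_affineSpan]
      exact hmono
  refine ⟨hub, hexp, ?_⟩
  rw [hdF, hPdim]

lemma two_pi_pos : (0:ℝ) < 2 * Real.pi := by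
  have := Real.pi_pos; linarith

lemma Lf_shift (a : ℝ) (k : ℤ) (z : E2) : Lf (a + k * (2 * Real.pi)) z = Lf a z := by
  rw [Lf_apply, Lf_apply, Real.cos_add_int_mul_two_pi, Real.sin_add_int_mul_two_pi]

lemma toIocMod_eq_add (lo c : ℝ) :
    ∃ k : ℤ, toIocMod two_pi_pos lo c = c + k * (2 * Real.pi) := by
  refine ⟨-toIocDiv two_pi_pos lo c, ?_⟩
  have h := toIocMod_sub_self two_pi_pos lo c
  push_cast [zsmul_eq_mul] at h ⊢
  linarith

lemma Lf_toIocMod (lo c : ℝ) (z : E2) : Lf (toIocMod two_pi_pos lo c) z = Lf c z := by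
  obtain ⟨k, hk⟩ := toIocMod_eq_add lo c
  rw [hk, Lf_shift]

lemma norm_sq_E2 (z : E2) : z 0 ^ 2 + z 1 ^ 2 = ‖z‖ ^ 2 := by
  rw [EuclideanSpace.norm_eq, Real.sq_sqrt (by positivity)]
  simp [Fin.sum_univ_two, sq_abs]

set_option maxHeartbeats 2000000 in
lemma lemmaB (s0 : Finset E2) (hne : s0.Nonempty)
    (hPdim : polyDim (convexHull ℝ (s0 : Set E2)) = 2)
    (x : E2) (hx : x ∉ convexHull ℝ (s0 : Set E2)) :
    ∃ φ : E2 →ᵃ[ℝ] ℝ,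
      (∀ y ∈ convexHull ℝ (s0 : Set E2), φ y ≤ 0) ∧ 0 < φ x ∧
      IsFacet {y ∈ convexHull ℝ (s0 : Set E2) | φ y = 0} (convexHull ℝ (s0 : Set E2)) := by
  classical
  have hMq : ∀ (a : ℝ), ∀ q ∈ s0, Lf a q ≤ s0.sup' hne (fun q => Lf a q) :=
    fun a q hq => Finset.le_sup' _ hq
  have hMex : ∀ a : ℝ, ∃ q ∈ s0, s0.sup' hne (fun q => Lf a q) = Lf a q := by
    intro a
    obtain ⟨q, hq, hql⟩ := Finset.exists_mem_eq_sup' hne (fun q => Lf a q)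
    exact ⟨q, hq, hql⟩
  set M : ℝ → ℝ := fun a => s0.sup' hne (fun q => Lf a q) with hMdef
  set f : ℝ → ℝ := fun a => Lf a x - M a with hfdef
  suffices hsuff : ∃ a : ℝ, ∃ q1 ∈ s0, ∃ q2 ∈ s0, q1 ≠ q2 ∧
      (∀ q ∈ s0, Lf a q ≤ Lf a q1) ∧ Lf a q2 = Lf a q1 ∧ Lf a q1 < Lf a x by
    obtain ⟨a, q1, hq1, q2, hq2, hne12, hmax, heq, hlt⟩ := hsuff
    have hzn : Lf a (nv a) ≠ 0 := by rw [Lf_nv]; norm_num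
    obtain ⟨hub, hfacet⟩ := facet_of_two s0 hPdim (Lf a) (nv a) hzn q1 q2 hq1 hq2 hne12 hmax heq
    refine ⟨((Lf a : E2 →ₗ[ℝ] ℝ).toAffineMap : E2 →ᵃ[ℝ] ℝ) - AffineMap.const ℝ E2 (Lf a q1),
      ?_, ?_, ?_⟩
    · intro y hy
      simp only [AffineMap.coe_sub, Pi.sub_apply, LinearMap.coe_toAffineMap,
        ContinuousLinearMap.coe_coe, AffineMap.const_apply]
      linarith [hub y hy]
    · simp only [AffineMap.coe_sub, Pi.sub_apply, LinearMap.coe_toAffineMap,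
        ContinuousLinearMap.coe_coe, AffineMap.const_apply]
      linarith
    · have hseteq : {y ∈ convexHull ℝ (s0 : Set E2) |
          (((Lf a : E2 →ₗ[ℝ] ℝ).toAffineMap : E2 →ᵃ[ℝ] ℝ)
            - AffineMap.const ℝ E2 (Lf a q1)) y = 0}
          = {y ∈ convexHull ℝ (s0 : Set E2) | Lf a y = Lf a q1} := by
        ext y
        simp only [Set.mem_setOf_eq, AffineMap.coe_sub, Pi.sub_apply,
          LinearMap.coe_toAffineMap, ContinuousLinearMap.coe_coe, AffineMap.const_apply,
          sub_eq_zero]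
      rw [hseteq]
      exact hfacet
  -- now prove hsuff by contradiction
  by_contra hcon
  push_neg at hcon
  have huniqmax : ∀ a : ℝ, 0 < f a → ∀ q1 ∈ s0, ∀ q2 ∈ s0,
      Lf a q1 = M a → Lf a q2 = M a → q1 = q2 := by
    intro a hfa q1 hq1 q2 hq2 h1 h2
    by_contra hne12
    have hmax : ∀ q ∈ s0, Lf a q ≤ Lf a q1 := fun q hq => h1 ▸ hMq a q hq
    have := hcon a q1 hq1 q2 hq2 hne12 hmax (h2.trans h1.symm)
    have hfa' : Lf a q1 < Lf a x := by
      have : f a = Lf a x - M a := rfl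
      rw [h1]; linarith
    linarith
  have hcont_pt : ∀ z : E2, Continuous fun a : ℝ => Lf a z := by
    intro z
    simp only [Lf_apply]
    fun_prop
  have hMcont : Continuous M := Continuous.finset_sup'_apply hne fun q _ => hcont_pt q
  have hfcont : Continuous f := (hcont_pt x).sub hMcont
  -- find a0 with 0 < f a0, via separation
  have hPconv : Convex ℝ (convexHull ℝ (s0 : Set E2)) := convex_convexHull ℝ _
  have hPclosed : IsClosed (convexHull ℝ (s0 : Set E2)) :=
    (Set.Finite.isCompact_convexHull (𝕜 := ℝ) (s0.finite_toSet)).isClosed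
  obtain ⟨l, cu, hlu, hux⟩ := geometric_hahn_banach_closed_point hPconv hPclosed hx
  set w := (InnerProductSpace.toDual ℝ E2).symm l with hwdef
  have hwl : ∀ y : E2, (inner ℝ w y : ℝ) = l y := fun y => InnerProductSpace.toDual_symm_apply
  have hinner : ∀ y : E2, (inner ℝ w y : ℝ) = w 0 * y 0 + w 1 * y 1 := by
    intro y
    rw [PiLp.inner_apply]
    simp [Fin.sum_univ_two]
    ring
  obtain ⟨q0, hq0⟩ := id hne
  have hq0P : q0 ∈ convexHull ℝ (s0 : Set E2) := subset_convexHull ℝ _ hq0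
  have hwne : w ≠ 0 := by
    intro h0
    have h1 : l q0 = 0 := by rw [← hwl q0, h0]; simp
    have h2 : l x = 0 := by rw [← hwl x, h0]; simp
    have := hlu q0 hq0P
    rw [h1] at this; rw [h2] at hux
    linarith
  have hr : 0 < ‖w‖ := norm_pos_iff.2 hwne
  have hr2 : w 0 ^ 2 + w 1 ^ 2 = ‖w‖ ^ 2 := norm_sq_E2 w
  obtain ⟨a0, ha0c, ha0s⟩ := exists_angle (w 0 / ‖w‖) (w 1 / ‖w‖) (by
    field_simp
    linarith)
  have hLf_w : ∀ y : E2, Lf a0 y = l y / ‖w‖ := by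
    intro y
    rw [Lf_apply, ha0c, ha0s, ← hwl y, hinner y]
    field_simp
    try ring
  have hfa0 : 0 < f a0 := by
    obtain ⟨qm, hqm, hqM⟩ := hMex a0
    have h1 : l qm < l x := lt_trans (hlu qm (subset_convexHull ℝ _ hqm)) hux
    have : f a0 = Lf a0 x - Lf a0 qm := by rw [hfdef]; simp only; rw [← hqM]
    rw [this, hLf_w, hLf_w]
    rw [div_sub_div_same]
    exact div_pos (by linarith) hr
  -- a direction with f ≤ 0
  have hq0x : q0 ≠ x := fun h => hx (h ▸ hq0P)
  have hρ : 0 < ‖q0 - x‖ := by rw [norm_pos_iff]; exact sub_ne_zero.2 hq0x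
  have hρ2 : (q0 - x) 0 ^ 2 + (q0 - x) 1 ^ 2 = ‖q0 - x‖ ^ 2 := norm_sq_E2 _
  have e0 : (q0 - x) 0 = q0 0 - x 0 := by simp
  have e1 : (q0 - x) 1 = q0 1 - x 1 := by simp
  rw [e0, e1] at hρ2
  obtain ⟨b, hbc, hbs⟩ := exists_angle ((q0 - x) 0 / ‖q0 - x‖) ((q0 - x) 1 / ‖q0 - x‖) (by
    rw [e0, e1]
    field_simp
    linarith)
  have hfb : f b ≤ 0 := by
    have h1 : Lf b q0 - Lf b x = ‖q0 - x‖ := by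
      rw [Lf_apply, Lf_apply, hbc, hbs, e0, e1]
      field_simp
      linear_combination hρ2
    have h2 := hMq b q0 hq0
    have h3 : f b = Lf b x - M b := rfl
    linarith
  -- shift b to just below a0
  obtain ⟨k1, hk1⟩ := toIocMod_eq_add (a0 - 2 * Real.pi) b
  set β1 := toIocMod two_pi_pos (a0 - 2 * Real.pi) b with hβ1def
  have hβ1mem := toIocMod_mem_Ioc two_pi_pos (a0 - 2 * Real.pi) b
  rw [sub_add_cancel] at hβ1mem
  have hfshift : ∀ (c : ℝ) (k : ℤ), f (c + k * (2 * Real.pi)) = f c := by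
    intro c k
    have hM : M (c + k * (2 * Real.pi)) = M c := by
      rw [hMdef]
      exact Finset.sup'_congr hne rfl (fun q _ => Lf_shift c k q)
    have : f (c + k * (2 * Real.pi)) = Lf (c + k * (2 * Real.pi)) x - M (c + k * (2 * Real.pi)) :=
      rfl
    rw [this, hM, Lf_shift]
  have hfβ1 : f β1 ≤ 0 := by
    have hβ1eq : β1 = b + k1 * (2 * Real.pi) := hk1
    rw [hβ1eq, hfshift]
    exact hfb
  have hβ1lt : β1 < a0 := lt_of_le_of_ne hβ1mem.2 (fun h => by rw [h] at hfβ1; linarith)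
  set β2 := β1 + 2 * Real.pi with hβ2def
  have hfβ2 : f β2 ≤ 0 := by
    have h : β2 = β1 + (1 : ℤ) * (2 * Real.pi) := by rw [hβ2def]; push_cast; ring
    rw [h, hfshift]
    exact hfβ1
  have ha0β2 : a0 < β2 := by
    have := hβ1mem.1
    rw [hβ2def]
    linarith
  -- α1 : last zero before a0
  set S1 := Icc β1 a0 ∩ {t : ℝ | f t ≤ 0} with hS1def
  have hS1closed : IsClosed S1 := isClosed_Icc.inter (isClosed_le hfcont continuous_const)
  have hS1ne : S1.Nonempty := ⟨β1, ⟨le_refl β1, hβ1lt.le⟩, hfβ1⟩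
  have hS1bdd : BddAbove S1 := ⟨a0, fun t ht => ht.1.2⟩
  set α1 := sSup S1 with hα1def
  have hα1mem : α1 ∈ S1 := hS1closed.csSup_mem hS1ne hS1bdd
  have hfα1 : f α1 ≤ 0 := hα1mem.2
  have hβ1α1 : β1 ≤ α1 := hα1mem.1.1
  have hα1lt : α1 < a0 := lt_of_le_of_ne hα1mem.1.2 (fun h => by rw [h] at hfα1; linarith)
  have hfpos1 : ∀ t, α1 < t → t ≤ a0 → 0 < f t := by
    intro t h1 h2
    by_contra hcc
    push_neg at hcc
    have htS : t ∈ S1 := ⟨⟨le_trans hβ1α1 h1.le, h2⟩, hcc⟩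
    exact absurd (le_csSup hS1bdd htS) (not_le.2 h1)
  -- α2 : first zero after a0
  set S2 := Icc a0 β2 ∩ {t : ℝ | f t ≤ 0} with hS2def
  have hS2closed : IsClosed S2 := isClosed_Icc.inter (isClosed_le hfcont continuous_const)
  have hS2ne : S2.Nonempty := ⟨β2, ⟨ha0β2.le, le_refl β2⟩, hfβ2⟩
  have hS2bdd : BddBelow S2 := ⟨a0, fun t ht => ht.1.1⟩
  set α2 := sInf S2 with hα2def
  have hα2mem : α2 ∈ S2 := hS2closed.csInf_mem hS2ne hS2bdd
  have hfα2 : f α2 ≤ 0 := hα2mem.2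
  have hα2β2 : α2 ≤ β2 := hα2mem.1.2
  have hα2gt : a0 < α2 :=
    lt_of_le_of_ne hα2mem.1.1 (fun h => by rw [← h] at hfα2; linarith)
  have hfpos2 : ∀ t, a0 ≤ t → t < α2 → 0 < f t := by
    intro t h1 h2
    by_contra hcc
    push_neg at hcc
    have htS : t ∈ S2 := ⟨⟨h1, le_trans h2.le hα2β2⟩, hcc⟩
    exact absurd (csInf_le hS2bdd htS) (not_le.2 h2)
  have hα12 : α1 < α2 := lt_trans hα1lt hα2gt
  have hfposO : ∀ t ∈ Ioo α1 α2, 0 < f t := by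
    rintro t ⟨h1, h2⟩
    rcases le_or_gt t a0 with h | h
    · exact hfpos1 t h1 h
    · exact hfpos2 t h.le h2
  obtain ⟨u, hu, huM⟩ := hMex a0
  -- the maximizer is constantly u on the open arc
  have hkey : ∀ t ∈ Ioo α1 α2, Lf t u = M t := by
    by_contra hk
    push_neg at hk
    obtain ⟨t0, ht0, ht0ne⟩ := hk
    have hZopen : IsOpen {t : ℝ | t ∈ Ioo α1 α2 ∧ Lf t u = M t} := by
      rw [isOpen_iff_mem_nhds]
      rintro t ⟨htO, htM⟩
      have hstrict : ∀ q ∈ s0.erase u, Lf t q < Lf t u := by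
        intro q hq
        obtain ⟨hqu, hqs⟩ := Finset.mem_erase.1 hq
        rcases eq_or_lt_of_le (hMq t q hqs) with h | h
        · exact absurd (huniqmax t (hfposO t htO) q hqs u hu h htM) hqu
        · rw [htM]; exact h
      have hev1 : ∀ᶠ c in 𝓝 t, ∀ q ∈ s0.erase u, Lf c q < Lf c u := by
        rw [Finset.eventually_all]
        intro q hq
        exact (isOpen_lt (hcont_pt q) (hcont_pt u)).mem_nhds (hstrict q hq)
      have hev2 : ∀ᶠ c in 𝓝 t, c ∈ Ioo α1 α2 := isOpen_Ioo.mem_nhds htO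
      filter_upwards [hev1, hev2] with c hc1 hc2
      refine ⟨hc2, le_antisymm (hMq c u hu) (Finset.sup'_le hne _ fun q hq => ?_)⟩
      by_cases hqu : q = u
      · subst hqu; exact le_refl _
      · exact (hc1 q (Finset.mem_erase.2 ⟨hqu, hq⟩)).le
    have hVopen : IsOpen {t : ℝ | Lf t u < M t} := isOpen_lt (hcont_pt u) hMcont
    have hsub : Ioo α1 α2 ⊆ {t : ℝ | t ∈ Ioo α1 α2 ∧ Lf t u = M t} ∪ {t : ℝ | Lf t u < M t} := by
      intro t ht
      rcases eq_or_lt_of_le (hMq t u hu) with h | h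
      · exact Or.inl ⟨ht, h⟩
      · exact Or.inr h
    have hZne : (Ioo α1 α2 ∩ {t : ℝ | t ∈ Ioo α1 α2 ∧ Lf t u = M t}).Nonempty :=
      ⟨a0, ⟨hα1lt, hα2gt⟩, ⟨hα1lt, hα2gt⟩, huM.symm⟩
    have hVne : (Ioo α1 α2 ∩ {t : ℝ | Lf t u < M t}).Nonempty :=
      ⟨t0, ht0, lt_of_le_of_ne (hMq t0 u hu) ht0ne⟩
    obtain ⟨t1, _, ht1Z, ht1V⟩ := isPreconnected_Ioo _ _ hZopen hVopen hsub hZne hVne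
    exact absurd ht1Z.2 (ne_of_lt ht1V)
  have hcmp : ∀ q ∈ s0, ∀ t ∈ Icc α1 α2, Lf t q ≤ Lf t u := by
    intro q hq
    have hsubset : Ioo α1 α2 ⊆ {t : ℝ | Lf t q ≤ Lf t u} := fun t ht =>
      le_trans (hMq t q hq) (le_of_eq (hkey t ht).symm)
    have hcl := closure_minimal hsubset (isClosed_le (hcont_pt q) (hcont_pt u))
    rw [closure_Ioo (ne_of_lt hα12)] at hcl
    exact fun t ht => hcl ht
  have hMu : ∀ t ∈ Icc α1 α2, M t = Lf t u := fun t ht =>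
    le_antisymm (Finset.sup'_le hne _ fun q hq => hcmp q hq t ht) (hMq t u hu)
  have hf0' : ∀ t ∈ Icc α1 α2, 0 ≤ f t := by
    have hsubset : Ioo α1 α2 ⊆ {t : ℝ | 0 ≤ f t} := fun t ht => (hfposO t ht).le
    have hcl := closure_minimal hsubset (isClosed_le continuous_const hfcont)
    rw [closure_Ioo (ne_of_lt hα12)] at hcl
    exact fun t ht => hcl ht
  have hα1Icc : α1 ∈ Icc α1 α2 := ⟨le_refl _, hα12.le⟩
  have hα2Icc : α2 ∈ Icc α1 α2 := ⟨hα12.le, le_refl _⟩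
  have hfα1' : f α1 = 0 := le_antisymm hfα1 (hf0' α1 hα1Icc)
  have hfα2' : f α2 = 0 := le_antisymm hfα2 (hf0' α2 hα2Icc)
  have hLx1 : Lf α1 x = Lf α1 u := by
    have h1 : f α1 = Lf α1 x - M α1 := rfl
    rw [hMu α1 hα1Icc] at h1
    linarith [hfα1']
  have hLx2 : Lf α2 x = Lf α2 u := by
    have h1 : f α2 = Lf α2 x - M α2 := rfl
    rw [hMu α2 hα2Icc] at h1
    linarith [hfα2']
  have hxu : x ≠ u := fun h => hx (h ▸ subset_convexHull ℝ _ hu)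
  have hθpos : 0 < α2 - α1 := by linarith
  have hθle : α2 - α1 ≤ 2 * Real.pi := by
    have h2 : α2 ≤ β2 := hα2β2
    rw [hβ2def] at h2
    linarith
  rcases eq_or_lt_of_le hθle with hθeq | hθlt
  · -- full circle: all points of s0 equal u
    have hall : ∀ q ∈ s0, Lf 0 q = Lf 0 u := by
      intro q hq
      have hequ : q = u := by
        by_contra hqu
        have hd : q - u ≠ 0 := sub_ne_zero.2 hqu
        have hrq : 0 < ‖q - u‖ := norm_pos_iff.2 hd
        have hrq2 : (q - u) 0 ^ 2 + (q - u) 1 ^ 2 = ‖q - u‖ ^ 2 := norm_sq_E2 _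
        have f0 : (q - u) 0 = q 0 - u 0 := by simp
        have f1 : (q - u) 1 = q 1 - u 1 := by simp
        rw [f0, f1] at hrq2
        obtain ⟨c, hcc, hcs⟩ := exists_angle ((q - u) 0 / ‖q - u‖) ((q - u) 1 / ‖q - u‖) (by
          rw [f0, f1]
          field_simp
          linarith)
        have hcmem := toIocMod_mem_Ioc two_pi_pos α1 c
        have hcIcc : toIocMod two_pi_pos α1 c ∈ Icc α1 α2 := by
          constructor
          · exact hcmem.1.le
          · have := hcmem.2
            linarith
        have hle := hcmp q hq _ hcIcc
        rw [Lf_toIocMod, Lf_toIocMod] at hle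
        have hgt : Lf c q - Lf c u = ‖q - u‖ := by
          rw [Lf_apply, Lf_apply, hcc, hcs, f0, f1]
          field_simp
          linear_combination hrq2
        linarith
      rw [hequ]
    have hdim := dim_le_one s0 (Lf 0) (nv 0) (by rw [Lf_nv]; norm_num) u hall
    rw [hPdim] at hdim
    exact absurd hdim (by norm_num)
  · -- arc shorter than full circle: antipodal case
    have hd1 : Real.cos α1 * (x 0 - u 0) + Real.sin α1 * (x 1 - u 1) = 0 := by
      have h := hLx1
      rw [Lf_apply, Lf_apply] at h
      linear_combination h
    have hd2 : Real.cos α2 * (x 0 - u 0) + Real.sin α2 * (x 1 - u 1) = 0 := by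
      have h := hLx2
      rw [Lf_apply, Lf_apply] at h
      linear_combination h
    have hxune : x 0 - u 0 ≠ 0 ∨ x 1 - u 1 ≠ 0 := by
      by_contra h
      push_neg at h
      apply hxu
      have h0 : x 0 = u 0 := by linarith [h.1]
      have h1 : x 1 = u 1 := by linarith [h.2]
      ext i
      fin_cases i
      · exact h0
      · exact h1
    have hsin : Real.sin (α2 - α1) = 0 := by
      have hs := Real.sin_sub α2 α1
      rcases hxune with h | h
      · have hz : Real.sin (α2 - α1) * (x 0 - u 0) = 0 := by
          rw [hs]
          linear_combination Real.sin α2 * hd1 - Real.sin α1 * hd2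
        exact (mul_eq_zero.1 hz).resolve_right h
      · have hz : Real.sin (α2 - α1) * (x 1 - u 1) = 0 := by
          rw [hs]
          linear_combination Real.cos α1 * hd2 - Real.cos α2 * hd1
        exact (mul_eq_zero.1 hz).resolve_right h
    obtain ⟨n, hn⟩ := Real.sin_eq_zero_iff.1 hsin
    have hπpos := Real.pi_pos
    have hn1 : n = 1 := by
      have hθ' : 0 < (n : ℝ) * Real.pi := by rw [hn]; exact hθpos
      have hθ'' : (n : ℝ) * Real.pi < 2 * Real.pi := by rw [hn]; exact hθlt
      have h1' : 0 < n := by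
        by_contra hle
        push_neg at hle
        have h3 : (n : ℝ) ≤ 0 := by exact_mod_cast hle
        have h4 : (n : ℝ) * Real.pi ≤ 0 := mul_nonpos_iff.2 (Or.inr ⟨h3, hπpos.le⟩)
        linarith
      have h2' : n < 2 := by
        by_contra hge
        push_neg at hge
        have h3 : (2 : ℝ) ≤ (n : ℝ) := by exact_mod_cast hge
        have h4 : 2 * Real.pi ≤ (n : ℝ) * Real.pi := mul_le_mul_of_nonneg_right h3 hπpos.le
        linarith
      omega
    have hα2eq : α2 = α1 + Real.pi := by
      rw [hn1] at hn
      push_cast at hn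
      linarith
    have hzero : ∀ q ∈ s0, Lf α1 q = Lf α1 u := by
      intro q hq
      have h1 := hcmp q hq α1 hα1Icc
      have h2 := hcmp q hq α2 hα2Icc
      rw [hα2eq] at h2
      rw [Lf_apply, Lf_apply] at h1 h2 ⊢
      rw [Real.cos_add_pi, Real.sin_add_pi] at h2
      linarith
    have hdim := dim_le_one s0 (Lf α1) (nv α1) (by rw [Lf_nv]; norm_num) u hzero
    rw [hPdim] at hdim
    exact absurd hdim (by norm_num)

lemma aff_apply (φ : E2 →ᵃ[ℝ] ℝ) (y z : E2) : φ y = φ.linear (y - z) + φ z := by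
  have h := φ.map_vadd z (y - z)
  rw [vadd_eq_add, sub_add_cancel] at h
  rw [h, vadd_eq_add]

end Stmt10Aux

set_option maxHeartbeats 2000000 in
theorem stmt10 (P e : Set (EuclideanSpace ℝ (Fin 2))) (v : EuclideanSpace ℝ (Fin 2))
    (hP : IsPolytope P) (hdim : polyDim P = 2) (hv : v ∉ P)
    (hvis : VisibleFacet P e v)
    (huniq : ∀ F : Set (EuclideanSpace ℝ (Fin 2)), VisibleFacet P F v → F = e) :
    closure (convexHull ℝ (P ∪ {v}) \ P) = convexHull ℝ (e ∪ {v}) ∧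
      convexHull ℝ (e ∪ {v}) ∩ P = e := by
  classical
  open Stmt10Aux in
  obtain ⟨s0, rfl⟩ := hP
  set P : Set Stmt10Aux.E2 := convexHull ℝ (s0 : Set Stmt10Aux.E2) with hPdef
  obtain ⟨⟨hexp, hedim⟩, φ, hφP, hφe, hφv⟩ := hvis
  rw [hdim] at hedim
  have he1 : polyDim e = 1 := by omega
  -- e has two distinct points
  have heNe : e.Nonempty := by
    by_contra h
    rw [Set.not_nonempty_iff_eq_empty] at h
    rw [h] at he1
    rw [polyDim, AffineSubspace.span_empty, AffineSubspace.direction_bot, finrank_bot] at he1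
    exact absurd he1 (by norm_num)
  obtain ⟨a, ha⟩ := heNe
  have hbex : ∃ b ∈ e, b ≠ a := by
    by_contra h
    push_neg at h
    have he_sing : e = {a} := Set.eq_singleton_iff_unique_mem.2 ⟨ha, fun y hy => h y hy⟩
    rw [he_sing, polyDim, direction_affineSpan, vectorSpan_singleton, finrank_bot] at he1
    exact absurd he1 (by norm_num)
  obtain ⟨b, hb, hba⟩ := hbex
  obtain ⟨l0, hl0⟩ := hexp ⟨a, ha⟩
  have heP : e ⊆ P := by rw [hl0]; exact fun y hy => hy.1
  have haP : a ∈ P := heP ha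
  have hbP : b ∈ P := heP hb
  have ha' : a ∈ P ∧ ∀ y ∈ P, l0 y ≤ l0 a := by have h := ha; rw [hl0] at h; exact h
  have hb' : b ∈ P ∧ ∀ y ∈ P, l0 y ≤ l0 b := by have h := hb; rw [hl0] at h; exact h
  have hl0ab : l0 b = l0 a := le_antisymm (ha'.2 b hbP) (hb'.2 a haP)
  have hφa : φ a = 0 := hφe a ha
  have hφb : φ b = 0 := hφe b hb
  have hφvlin : φ.linear (v - a) = φ v := by
    have h := Stmt10Aux.aff_apply φ v a
    rw [hφa] at h
    linarith
  have hφba : φ.linear (b - a) = 0 := by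
    have h := Stmt10Aux.aff_apply φ b a
    rw [hφa, hφb] at h
    linarith
  have hbane : b - a ≠ 0 := sub_ne_zero.2 hba
  have hker : LinearMap.ker φ.linear = (ℝ ∙ (b - a)) := by
    have hle : (ℝ ∙ (b - a)) ≤ LinearMap.ker φ.linear := by
      rw [Submodule.span_singleton_le_iff_mem]
      exact LinearMap.mem_ker.2 hφba
    have hnetop : LinearMap.ker φ.linear ≠ ⊤ := by
      intro h
      have hmem : v - a ∈ LinearMap.ker φ.linear := by rw [h]; exact Submodule.mem_top
      have := LinearMap.mem_ker.1 hmem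
      rw [hφvlin] at this
      linarith
    have h1 := Submodule.finrank_lt hnetop
    rw [Stmt10Aux.finrank_E2] at h1
    exact (Submodule.eq_of_le_of_finrank_le hle
      (by rw [finrank_span_singleton hbane]; omega)).symm
  have hPzero : ∀ y ∈ P, φ y = 0 → y ∈ e := by
    intro y hy hy0
    have h1 : φ.linear (y - a) = 0 := by
      have h := Stmt10Aux.aff_apply φ y a
      rw [hφa, hy0] at h
      linarith
    have h2 : y - a ∈ (ℝ ∙ (b - a)) := by rw [← hker]; exact LinearMap.mem_ker.2 h1
    obtain ⟨t, ht⟩ := Submodule.mem_span_singleton.1 h2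
    have hy' : y = t • (b - a) + a := by rw [ht]; abel
    have hl0y : l0 y = l0 a := by
      rw [hy']
      simp only [map_add, map_smul, map_sub, ContinuousLinearMap.coe_coe, smul_eq_mul]
      rw [hl0ab]
      ring
    rw [hl0]
    exact ⟨hy, fun z hz => by rw [hl0y]; exact ha'.2 z hz⟩
  -- Q facts
  set Q : Set Stmt10Aux.E2 := convexHull ℝ (P ∪ {v}) with hQdef
  have hQ2 : Q = convexHull ℝ ((s0 : Set Stmt10Aux.E2) ∪ {v}) := by
    rw [hQdef, hPdef]
    exact convexHull_convexHull_union_left _ _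
  have hQclosed : IsClosed Q := by
    rw [hQ2, Set.union_singleton, ← Finset.coe_insert]
    exact (Set.Finite.isCompact_convexHull (𝕜 := ℝ) (Finset.finite_toSet _)).isClosed
  have hQconv : Convex ℝ Q := convex_convexHull ℝ _
  have hPQ : P ⊆ Q := fun y hy => subset_convexHull ℝ _ (Or.inl hy)
  have hvQ : v ∈ Q := subset_convexHull ℝ _ (Or.inr rfl)
  have hPne : P.Nonempty := ⟨a, haP⟩
  have hPconv : Convex ℝ P := convex_convexHull ℝ _
  have hs0ne : s0.Nonempty := Finset.coe_nonempty.1 (convexHull_nonempty_iff.1 hPne)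
  have hdecomp : ∀ x ∈ Q, ∃ p ∈ P, x ∈ segment ℝ v p := by
    intro x hx
    rw [hQdef, Set.union_singleton, convexHull_insert hPne, hPconv.convexHull_eq,
      mem_convexJoin] at hx
    obtain ⟨y, hy, p, hp, hseg⟩ := hx
    rw [Set.mem_singleton_iff] at hy
    subst hy
    exact ⟨p, hp, hseg⟩
  -- the crux : points of Q off P have positive φ
  have hcrux : ∀ x ∈ Q, x ∉ P → 0 < φ x := by
    intro x hxQ hxP
    obtain ⟨φx, hφxP, hφxpos, hφxfacet⟩ := Stmt10Aux.lemmaB s0 hs0ne hdim x hxP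
    obtain ⟨p, hp, hseg⟩ := hdecomp x hxQ
    obtain ⟨c, d, hc, hd, hcd, hx_eq⟩ := hseg
    have hcpos : 0 < c := by
      rcases eq_or_lt_of_le hc with h | h
      · exfalso
        apply hxP
        have hd1 : d = 1 := by linarith
        rw [← hx_eq, ← h, hd1, zero_smul, one_smul, zero_add]
        exact hp
      · exact h
    have hx_val : φx x = c * φx v + d * φx p := by
      rw [← hx_eq, Convex.combo_affine_apply hcd]
      simp [smul_eq_mul]
    have hφxv : 0 < φx v := by
      have h5 : d * φx p ≤ 0 := mul_nonpos_iff.2 (Or.inl ⟨hd, hφxP p hp⟩)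
      have h6 : 0 < c * φx v := by linarith
      rcases mul_pos_iff.1 h6 with ⟨_, h⟩ | ⟨h, _⟩
      · exact h
      · linarith
    have hvf : VisibleFacet P {y ∈ P | φx y = 0} v :=
      ⟨hφxfacet, φx, hφxP, fun y hy => hy.2, hφxv⟩
    have hFx := huniq _ hvf
    have hφxa : φx a = 0 := by
      have h : a ∈ {y ∈ P | φx y = 0} := by rw [hFx]; exact ha
      exact h.2
    have hφxb : φx b = 0 := by
      have h : b ∈ {y ∈ P | φx y = 0} := by rw [hFx]; exact hb
      exact h.2
    have hφxba2 : φx.linear (b - a) = 0 := by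
      have h := Stmt10Aux.aff_apply φx b a
      rw [hφxa, hφxb] at h
      linarith
    have hφxva : φx.linear (v - a) = φx v := by
      have h := Stmt10Aux.aff_apply φx v a
      rw [hφxa] at h
      linarith
    have hva_notin : v - a ∉ (ℝ ∙ (b - a)) := by
      intro h
      have hmem : v - a ∈ LinearMap.ker φ.linear := by rw [hker]; exact h
      have := LinearMap.mem_ker.1 hmem
      rw [hφvlin] at this
      linarith
    have htop : (Submodule.span ℝ {b - a, v - a} : Submodule ℝ Stmt10Aux.E2) = ⊤ := by
      by_contra h
      have h1 := Submodule.finrank_lt h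
      rw [Stmt10Aux.finrank_E2] at h1
      have hle2 : (ℝ ∙ (b - a)) ≤ Submodule.span ℝ {b - a, v - a} :=
        Submodule.span_mono (by simp)
      have heq2 := Submodule.eq_of_le_of_finrank_le hle2
        (by rw [finrank_span_singleton hbane]; exact Nat.lt_succ_iff.1 h1)
      apply hva_notin
      rw [heq2]
      exact Submodule.subset_span (by simp)
    have hxa_mem : x - a ∈ Submodule.span ℝ ({b - a, v - a} : Set Stmt10Aux.E2) := by
      rw [htop]; exact Submodule.mem_top
    obtain ⟨sc, tc, hst⟩ := Submodule.mem_span_pair.1 hxa_mem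
    have hφxx : φx x = tc * φx v := by
      have h1 := Stmt10Aux.aff_apply φx x a
      rw [← hst, map_add, map_smul, map_smul, hφxba2, hφxva, hφxa] at h1
      simpa [smul_eq_mul] using h1
    have htcpos : 0 < tc := by
      by_contra h
      push_neg at h
      have : tc * φx v ≤ 0 := mul_nonpos_iff.2 (Or.inr ⟨h, hφxv.le⟩)
      linarith
    have hφxval : φ x = tc * φ v := by
      have h1 := Stmt10Aux.aff_apply φ x a
      rw [← hst, map_add, map_smul, map_smul, hφba, hφvlin, hφa] at h1
      simpa [smul_eq_mul] using h1
    rw [hφxval]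
    exact mul_pos htcpos hφv
  -- T = Q ∩ halfplane
  set T : Set Stmt10Aux.E2 := convexHull ℝ (e ∪ {v}) with hTdef
  have hTsub : T ⊆ Q ∩ {y : Stmt10Aux.E2 | 0 ≤ φ y} := by
    rw [hTdef]
    apply convexHull_min
    · rintro y (hy | hy)
      · exact ⟨hPQ (heP hy), le_of_eq (hφe y hy).symm⟩
      · rw [Set.mem_singleton_iff] at hy
        subst hy
        exact ⟨hvQ, hφv.le⟩
    · exact hQconv.inter ((convex_Ici (0 : ℝ)).affine_preimage φ)
  have hTsup : Q ∩ {y : Stmt10Aux.E2 | 0 ≤ φ y} ⊆ T := by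
    rintro x ⟨hxQ, hxφ⟩
    by_cases hxP : x ∈ P
    · have hx0 : φ x = 0 := le_antisymm (hφP x hxP) hxφ
      exact subset_convexHull ℝ _ (Or.inl (hPzero x hxP hx0))
    · obtain ⟨p, hp, hseg⟩ := hdecomp x hxQ
      obtain ⟨c, d, hc, hd, hcd, hx_eq⟩ := hseg
      have hφp : φ p ≤ 0 := hφP p hp
      have hD : 0 < φ v - φ p := by linarith
      set σ := -φ p / (φ v - φ p) with hσdef
      have hσ0 : 0 ≤ σ := div_nonneg (by linarith) hD.le
      have hσ1 : σ < 1 := by rw [hσdef, div_lt_one hD]; linarith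
      have hσmul : σ * (φ v - φ p) = -φ p := by rw [hσdef]; field_simp
      have hyQ : (σ • v + (1 - σ) • p) ∈ Q :=
        hQconv.segment_subset hvQ (hPQ hp) ⟨σ, 1 - σ, hσ0, by linarith, by ring, rfl⟩
      have hyφ : φ (σ • v + (1 - σ) • p) = 0 := by
        rw [Convex.combo_affine_apply (by ring : σ + (1 - σ) = 1)]
        simp only [smul_eq_mul]
        linear_combination hσmul
      have hyP : (σ • v + (1 - σ) • p) ∈ P := by
        by_contra hyP'
        have := hcrux _ hyQ hyP'
        linarith
      have hye : (σ • v + (1 - σ) • p) ∈ e := hPzero _ hyP hyφ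
      have hcφ : φ x = c * φ v + d * φ p := by
        rw [← hx_eq, Convex.combo_affine_apply hcd]
        simp [smul_eq_mul]
      have hd' : d = 1 - c := by linarith
      have hxφ' : (0:ℝ) ≤ φ x := hxφ
      have hcσ : σ ≤ c := by
        rw [hσdef, div_le_iff₀ hD]
        have hkey : c * (φ v - φ p) = φ x - φ p := by rw [hcφ, hd']; ring
        linarith
      have hc1 : c ≤ 1 := by linarith
      have h1σ : 0 < 1 - σ := by linarith
      set r := (c - σ) / (1 - σ) with hrdef
      have hr0 : 0 ≤ r := div_nonneg (by linarith) h1σ.le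
      have hr1 : r ≤ 1 := by rw [hrdef, div_le_one h1σ]; linarith
      have hrc : r + (1 - r) * σ = c := by rw [hrdef]; field_simp; ring
      have hrd : (1 - r) * (1 - σ) = d := by
        rw [hrdef, hd']
        field_simp
        try ring
      have hxseg : x = r • v + (1 - r) • (σ • v + (1 - σ) • p) := by
        rw [smul_add, smul_smul, smul_smul, ← add_assoc, ← add_smul, hrc, hrd, hx_eq]
      have hvT : v ∈ convexHull ℝ (e ∪ {v}) := subset_convexHull ℝ _ (Or.inr rfl)
      have hyT : (σ • v + (1 - σ) • p) ∈ convexHull ℝ (e ∪ {v}) :=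
        subset_convexHull ℝ _ (Or.inl hye)
      rw [hTdef]
      exact (convex_convexHull ℝ (e ∪ {v})).segment_subset hvT hyT
        ⟨r, 1 - r, hr0, by linarith, by ring, hxseg.symm⟩
  have hTeq : T = Q ∩ {y : Stmt10Aux.E2 | 0 ≤ φ y} := Set.Subset.antisymm hTsub hTsup
  have hφcont : Continuous φ := by
    have h : ⇑φ = fun y => φ.linear (y - a) + φ a := funext fun y => Stmt10Aux.aff_apply φ y a
    rw [h]
    exact ((φ.linear.continuous_of_finiteDimensional).comp
      (continuous_id.sub continuous_const)).add continuous_const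
  have hTclosed : IsClosed T := by
    rw [hTeq]
    exact hQclosed.inter (isClosed_le continuous_const hφcont)
  constructor
  · apply Set.Subset.antisymm
    · apply closure_minimal _ hTclosed
      rintro x ⟨hxQ, hxP⟩
      rw [hTeq]
      exact ⟨hxQ, (hcrux x hxQ hxP).le⟩
    · intro x hxT
      have hx' : x ∈ Q ∩ {y : Stmt10Aux.E2 | 0 ≤ φ y} := by rw [← hTeq]; exact hxT
      obtain ⟨hxQ, hxφ0⟩ := hx'
      have hxφ : (0:ℝ) ≤ φ x := hxφ0
      have h1 : Filter.Tendsto (fun n : ℕ => 1 / ((n : ℝ) + 1)) Filter.atTop (nhds 0) :=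
        tendsto_one_div_add_atTop_nhds_zero_nat
      have hseq : Filter.Tendsto
          (fun n : ℕ => (1 / ((n : ℝ) + 1)) • v + (1 - 1 / ((n : ℝ) + 1)) • x)
          Filter.atTop (nhds x) := by
        have h2a : Filter.Tendsto (fun n : ℕ => (1 / ((n : ℝ) + 1)) • v)
            Filter.atTop (nhds ((0 : ℝ) • v)) := h1.smul_const v
        have h2b : Filter.Tendsto (fun n : ℕ => (1 - 1 / ((n : ℝ) + 1)))
            Filter.atTop (nhds (1 - 0)) := Filter.Tendsto.sub tendsto_const_nhds h1
        have h2 := h2a.add (h2b.smul_const x)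
        simpa using h2
      apply mem_closure_of_tendsto hseq
      filter_upwards with n
      have htn : 0 < 1 / ((n : ℝ) + 1) := by positivity
      have htn1 : 1 / ((n : ℝ) + 1) ≤ 1 := by
        rw [div_le_one (by positivity)]
        linarith [(n.cast_nonneg : (0:ℝ) ≤ (n:ℝ))]
      have hval : φ ((1 / ((n : ℝ) + 1)) • v + (1 - 1 / ((n : ℝ) + 1)) • x)
          = (1 / ((n : ℝ) + 1)) * φ v + (1 - 1 / ((n : ℝ) + 1)) * φ x := by
        rw [Convex.combo_affine_apply (by ring)]
        simp [smul_eq_mul]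
      constructor
      · exact hQconv hvQ hxQ htn.le (by linarith) (by ring)
      · intro hmem
        have hpos : 0 < φ ((1 / ((n : ℝ) + 1)) • v + (1 - 1 / ((n : ℝ) + 1)) • x) := by
          rw [hval]
          nlinarith
        linarith [hφP _ hmem]
  · apply Set.Subset.antisymm
    · rintro y ⟨hyT, hyP⟩
      have hy' : y ∈ Q ∩ {z : Stmt10Aux.E2 | 0 ≤ φ z} := by rw [← hTeq]; exact hyT
      exact hPzero y hyP (le_antisymm (hφP y hyP) hy'.2)
    · intro y hy
      exact ⟨subset_convexHull ℝ _ (Or.inl hy), heP hy⟩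
end

section
/- Let P ⊂ ℝ^d be a full-dimensional polytope and v ∉ P. Then conv(P ∪ {v}) \ P equals the union over all facets F of P visible from v of the sets conv(F ∪ {v}) \ F; in particular if exactly one facet F is visible from v then closure(conv(P ∪ {v}) \ P) = conv(F ∪ {v}). -/
open Set

set_option linter.unusedSectionVars false

open Set

variable {E : Type*} [NormedAddCommGroup E] [NormedSpace ℝ E] [FiniteDimensional ℝ E]

/-- The conic hull of a finite set. -/
def coneHull (s : Finset E) : Set E :=
  {x | ∃ c : E → ℝ, (∀ z, 0 ≤ c z) ∧ ∑ z ∈ s, c z • z = x}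

lemma coneHull_mono {s t : Finset E} (h : t ⊆ s) : coneHull t ⊆ coneHull s := by
  classical
  rintro x ⟨c, hc, rfl⟩
  refine ⟨fun z => if z ∈ t then c z else 0, fun z => by by_cases h : z ∈ t <;> simp [h, hc z], ?_⟩
  rw [← Finset.sum_subset h]
  · exact Finset.sum_congr rfl fun z hz => by simp [hz]
  · intro z _ hz; simp [hz]

lemma coneHull_caratheodory {s : Finset E} {x : E} (hx : x ∈ coneHull s) :
    ∃ t ⊆ s, LinearIndependent ℝ (Subtype.val : {z // z ∈ t} → E) ∧ x ∈ coneHull t := by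
  classical
  induction s using Finset.strongInduction with
  | _ s ih =>
  by_cases hli : LinearIndependent ℝ (Subtype.val : {z // z ∈ s} → E)
  · exact ⟨s, le_refl _, hli, hx⟩
  · -- get a nontrivial relation
    rw [show (Subtype.val : {z // z ∈ s} → E) = fun z : (s : Set E) => (z : E) from rfl] at hli
    obtain ⟨g, hgsum, i₀, hgi₀⟩ := Fintype.not_linearIndependent_iff.1 hli
    -- turn `g` into a function on `E`
    set G : E → ℝ := fun z => if h : z ∈ s then g ⟨z, h⟩ else 0 with hG
    have hGsum : ∑ z ∈ s, G z • z = 0 := by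
      rw [← hgsum, ← Finset.sum_attach s (fun z => G z • z)]
      exact Finset.sum_congr rfl fun z _ => by simp [hG, z.2]
    have hGne : G (i₀ : E) ≠ 0 := by simpa [hG, i₀.2] using hgi₀
    have hi₀s : (i₀ : E) ∈ s := i₀.2
    -- wlog some coefficient is positive
    obtain ⟨G, hGsum, z₁, hz₁s, hz₁⟩ :
        ∃ G : E → ℝ, ∑ z ∈ s, G z • z = 0 ∧ ∃ z₁ ∈ s, 0 < G z₁ := by
      rcases lt_or_gt_of_ne hGne with h | h
      · exact ⟨fun z => -G z, by simp only [neg_smul, Finset.sum_neg_distrib, hGsum, neg_zero],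
          ⟨i₀, hi₀s, by simpa using h⟩⟩
      · exact ⟨G, hGsum, i₀, hi₀s, h⟩
    obtain ⟨c, hc, hcx⟩ := hx
    -- minimize c z / G z over positive G z
    set T : Finset E := s.filter (fun z => 0 < G z) with hT
    have hTne : T.Nonempty := ⟨z₁, by simp [hT, hz₁s, hz₁]⟩
    obtain ⟨z₀, hz₀T, hz₀min⟩ := T.exists_min_image (fun z => c z / G z) hTne
    have hz₀s : z₀ ∈ s := (Finset.mem_filter.1 hz₀T).1
    have hGz₀ : 0 < G z₀ := (Finset.mem_filter.1 hz₀T).2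
    set θ := c z₀ / G z₀ with hθ
    have hθ0 : 0 ≤ θ := div_nonneg (hc z₀) hGz₀.le
    set c' : E → ℝ := fun z => c z - θ * G z with hc'
    have hc'0 : ∀ z ∈ s, 0 ≤ c' z := by
      intro z hz
      by_cases h : 0 < G z
      · have h1 : θ ≤ c z / G z := hz₀min z (Finset.mem_filter.2 ⟨hz, h⟩)
        have h2 : θ * G z ≤ c z := by
          have := mul_le_mul_of_nonneg_right h1 h.le
          rwa [div_mul_cancel₀ _ h.ne'] at this
        simp only [hc']
        linarith
      · push_neg at h
        simp only [hc']
        nlinarith [hc z, hθ0]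
    have hc'z₀ : c' z₀ = 0 := by
      simp only [hc']; rw [hθ, div_mul_cancel₀ _ hGz₀.ne', sub_self]
    have hc'sum : ∑ z ∈ s, c' z • z = x := by
      simp only [hc', sub_smul, Finset.sum_sub_distrib, hcx, smul_smul]
      rw [show ∑ z ∈ s, (θ * G z) • z = θ • ∑ z ∈ s, G z • z by
        rw [Finset.smul_sum]; exact Finset.sum_congr rfl fun z _ => by rw [smul_smul]]
      simp [hGsum]
    have hxe : x ∈ coneHull (s.erase z₀) := by
      refine ⟨fun z => if z ∈ s.erase z₀ then c' z else 0, fun z => ?_, ?_⟩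
      · by_cases h : z ∈ s.erase z₀
        · simpa [h] using hc'0 _ (Finset.mem_of_mem_erase h)
        · simp [h]
      · have e1 : ∑ z ∈ s.erase z₀, (if z ∈ s.erase z₀ then c' z else 0) • z
            = ∑ z ∈ s.erase z₀, c' z • z := Finset.sum_congr rfl fun z hz => by rw [if_pos hz]
        rw [e1, Finset.sum_erase_eq_sub hz₀s, hc'z₀, hc'sum]
        simp
    obtain ⟨t, hts, hli', hxt⟩ := ih (s.erase z₀) (Finset.erase_ssubset hz₀s) hxe
    exact ⟨t, hts.trans (Finset.erase_subset _ _), hli', hxt⟩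

lemma isClosed_coneHull (s : Finset E) : IsClosed (coneHull s) := by
  classical
  -- coneHull s is the union of coneHulls of linearly independent subsets
  have : coneHull s = ⋃ t ∈ s.powerset.filter
      (fun t => LinearIndependent ℝ (Subtype.val : {z // z ∈ t} → E)), coneHull t := by
    ext x
    simp only [mem_iUnion, Finset.mem_filter, Finset.mem_powerset, exists_prop]
    constructor
    · intro hx
      obtain ⟨t, hts, hli, hxt⟩ := coneHull_caratheodory hx
      exact ⟨t, ⟨hts, hli⟩, hxt⟩
    · rintro ⟨t, ⟨hts, -⟩, hxt⟩
      exact coneHull_mono hts hxt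
  rw [this]
  refine isClosed_biUnion_finset fun t ht => ?_
  obtain ⟨-, hli⟩ := Finset.mem_filter.1 ht
  -- coneHull t is the image of the nonnegative orthant under an injective linear map
  set L : (({z // z ∈ t} → ℝ)) →ₗ[ℝ] E :=
    { toFun := fun c => ∑ z ∈ t.attach, c z • (z : E)
      map_add' := by intro a b; simp [add_smul, Finset.sum_add_distrib]
      map_smul' := by intro m a; simp [smul_smul, Finset.smul_sum]
    } with hL
  have hLinj : LinearMap.ker L = ⊥ := by
    rw [LinearMap.ker_eq_bot]
    intro a b hab
    have : ∑ z ∈ t.attach, (a z - b z) • (z : E) = 0 := by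
      simp only [sub_smul, Finset.sum_sub_distrib]
      simpa [hL] using congrArg (fun y => y - L b) hab
    funext i
    have := Fintype.linearIndependent_iff.1 hli (fun z => a z - b z) (by simpa using this) i
    linarith [sub_eq_zero.1 this]
  have key : coneHull t = L '' {c : {z // z ∈ t} → ℝ | ∀ z, 0 ≤ c z} := by
    ext x
    constructor
    · rintro ⟨c, hc, rfl⟩
      refine ⟨fun z => c z, fun z => hc z, ?_⟩
      simp only [hL, LinearMap.coe_mk, AddHom.coe_mk]
      exact Finset.sum_attach t (fun z => c z • z)
    · rintro ⟨c, hc, rfl⟩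
      refine ⟨fun z => if h : z ∈ t then c ⟨z, h⟩ else 0, fun z => ?_, ?_⟩
      · by_cases h : z ∈ t
        · simpa [h] using hc ⟨z, h⟩
        · simp [h]
      simp only [hL, LinearMap.coe_mk, AddHom.coe_mk]
      rw [← Finset.sum_attach t (fun z => (if h : z ∈ t then c ⟨z, h⟩ else 0) • z)]
      exact Finset.sum_congr rfl fun z _ => by simp [z.2]
  rw [key]
  have hclosed : IsClosed {c : {z // z ∈ t} → ℝ | ∀ z, 0 ≤ c z} := by
    have : {c : {z // z ∈ t} → ℝ | ∀ z, 0 ≤ c z} = ⋂ z, (fun c => c z) ⁻¹' (Ici 0) := by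
      ext c; simp [mem_iInter]
    rw [this]
    exact isClosed_iInter fun z => (isClosed_Ici).preimage (continuous_apply z)
  exact (L.isClosedEmbedding_of_injective hLinj).isClosedMap _ hclosed
section Geometry

open Set FiniteDimensional

variable {E : Type*} [NormedAddCommGroup E] [InnerProductSpace ℝ E] [FiniteDimensional ℝ E]

local notation "⟪" x ", " y "⟫" => @inner ℝ _ _ x y

/-- The candidate face of the polytope `conv s` determined by a normal vector `w`
(with base point `y`). -/
def Fface (s : Finset E) (y w : E) : Set E :=
  convexHull ℝ (s : Set E) ∩ {x | ⟪w, x - y⟫ = 0}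

lemma sep_cone {s : Finset E} {u : E} (hu : u ∉ coneHull s) :
    ∃ w : E, (∀ z ∈ s, ⟪w, z⟫ ≤ 0) ∧ 0 < ⟪w, u⟫ := by
  classical
  set K : ConvexCone ℝ E :=
    { carrier := coneHull s
      smul_mem' := by
        rintro c hc x ⟨a, ha, rfl⟩
        refine ⟨fun z => c * a z, fun z => mul_nonneg hc.le (ha z), ?_⟩
        rw [Finset.smul_sum]
        exact Finset.sum_congr rfl fun z _ => by rw [smul_smul]
      add_mem' := by
        rintro x ⟨a, ha, rfl⟩ y ⟨b, hb, rfl⟩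
        exact ⟨fun z => a z + b z, fun z => add_nonneg (ha z) (hb z), by
          rw [← Finset.sum_add_distrib]
          exact Finset.sum_congr rfl fun z _ => (add_smul _ _ _)⟩ } with hK
  have hne : ((K : Set E)).Nonempty := ⟨0, ⟨fun _ => 0, fun _ => le_rfl, by simp⟩⟩
  have hcl : IsClosed (K : Set E) := isClosed_coneHull s
  obtain ⟨w₀, hw₀, hw₀u⟩ :=
    (by
      let C : ProperCone ℝ E :=
        { toSubmodule := K.toPointedCone ⟨fun _ => 0, fun _ => le_rfl, by simp⟩, isClosed' := hcl }
      obtain ⟨y, h1, h2⟩ := C.hyperplane_separation' (x₀ := u) hu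
      exact ⟨y, fun x hx => h1 x hx, by rw [real_inner_comm]; exact h2⟩ :
      ∃ y : E, (∀ x ∈ K, 0 ≤ ⟪x, y⟫) ∧ ⟪y, u⟫ < 0)
  refine ⟨-w₀, fun z hz => ?_, ?_⟩
  · have hzK : z ∈ K := by
      refine ⟨fun x => if x = z then 1 else 0, fun x => by positivity, ?_⟩
      rw [Finset.sum_eq_single_of_mem z hz (fun b _ hb => by simp [hb])]
      simp
    have := hw₀ z hzK
    rw [inner_neg_left]
    rw [real_inner_comm] at this
    linarith
  · rw [inner_neg_left]
    linarith

/-- The affine functional `x ↦ ⟪w, x - y⟫`. -/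
noncomputable def innerAff (w y : E) : E →ᵃ[ℝ] ℝ where
  toFun x := ⟪w, x - y⟫
  linear := (innerSL ℝ w).toLinearMap
  map_vadd' p u := by
    simp only [vadd_eq_add, ContinuousLinearMap.coe_coe, innerSL_apply_apply]
    rw [add_sub_assoc, inner_add_right]

@[simp] lemma innerAff_apply (w y x : E) : innerAff w y x = ⟪w, x - y⟫ := rfl

lemma innerAff_linear (w y : E) (u : E) : (innerAff w y).linear u = ⟪w, u⟫ := rfl

lemma inner_le_on_hull {A : Set E} {w y : E} (h : ∀ z ∈ A, ⟪w, z - y⟫ ≤ 0) :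
    ∀ x ∈ convexHull ℝ A, ⟪w, x - y⟫ ≤ 0 := by
  intro x hx
  have hconv : Convex ℝ {x : E | ⟪w, x - y⟫ ≤ 0} := by
    have he : {x : E | ⟪w, x - y⟫ ≤ 0} = (innerAff w y) ⁻¹' (Iic 0) := rfl
    rw [he]
    exact Convex.affine_preimage _ (convex_Iic 0)
  exact convexHull_min h hconv hx

lemma inner_eq_on_affineSpan {A : Set E} {n y : E} (h : ∀ z ∈ A, ⟪n, z - y⟫ = 0) :
    ∀ x ∈ affineSpan ℝ A, ⟪n, x - y⟫ = 0 := by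
  intro x hx
  set S : AffineSubspace ℝ E :=
    AffineSubspace.mk' y (LinearMap.ker ((innerSL ℝ n).toLinearMap)) with hS
  have hAS : A ⊆ (S : Set E) := by
    intro z hz
    refine AffineSubspace.vsub_right_mem_direction_iff_mem (AffineSubspace.self_mem_mk' _ _) z |>.1 ?_
    rw [AffineSubspace.direction_mk']
    simpa [vsub_eq_sub, LinearMap.mem_ker] using h z hz
  have := (affineSpan_le.2 hAS) hx
  have h2 : x -ᵥ y ∈ S.direction :=
    AffineSubspace.vsub_mem_direction this (AffineSubspace.self_mem_mk' _ _)
  rw [hS, AffineSubspace.direction_mk'] at h2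
  simpa [vsub_eq_sub] using h2

lemma polyDim_lt {A B : Set E} {y z : E} (hAB : A ⊆ B) (hyA : y ∈ A) (hzB : z ∈ B)
    (hz : z ∉ affineSpan ℝ A) : polyDim A < polyDim B := by
  have hu : z - y ∉ (affineSpan ℝ A).direction := by
    intro hu
    exact hz (by
      have := AffineSubspace.vadd_mem_of_mem_direction hu (mem_affineSpan ℝ hyA)
      simpa [vadd_eq_add, sub_add_cancel] using this)
  have hlt : (affineSpan ℝ A).direction < (affineSpan ℝ A).direction ⊔ Submodule.span ℝ {z - y} := by
    refine lt_of_le_of_ne le_sup_left fun he => ?_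
    rw [he] at hu
    exact hu (Submodule.mem_sup_right (Submodule.mem_span_singleton_self _))
  have hle : (affineSpan ℝ A).direction ⊔ Submodule.span ℝ {z - y} ≤ (affineSpan ℝ B).direction := by
    refine sup_le (AffineSubspace.direction_le (affineSpan_mono ℝ hAB)) ?_
    rw [Submodule.span_singleton_le_iff_mem]
    have := AffineSubspace.vsub_mem_direction (mem_affineSpan ℝ hzB) (mem_affineSpan ℝ (hAB hyA))
    simpa [vsub_eq_sub] using this
  exact lt_of_lt_of_le (Submodule.finrank_lt_finrank_of_lt hlt) (Submodule.finrank_mono hle)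

lemma polyDim_add_one_le {F : Set E} {w y : E} (hw : w ≠ 0)
    (hF : ∀ x ∈ F, ⟪w, x - y⟫ = 0) : polyDim F + 1 ≤ Module.finrank ℝ E := by
  set l : E →ₗ[ℝ] ℝ := (innerSL ℝ w).toLinearMap with hl
  have hFS : affineSpan ℝ F ≤ AffineSubspace.mk' y (LinearMap.ker l) := by
    refine affineSpan_le.2 fun z hz => ?_
    refine AffineSubspace.vsub_right_mem_direction_iff_mem (AffineSubspace.self_mem_mk' _ _) z |>.1 ?_
    rw [AffineSubspace.direction_mk']
    simpa [hl, vsub_eq_sub, LinearMap.mem_ker] using hF z hz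
  have hd : (affineSpan ℝ F).direction ≤ LinearMap.ker l := by
    have := AffineSubspace.direction_le hFS
    rwa [AffineSubspace.direction_mk'] at this
  have hrange : Module.finrank ℝ (LinearMap.range l) = 1 := by
    have h1 : LinearMap.range l ≠ ⊥ := by
      intro hbot
      have : l w = 0 := by
        have : l w ∈ LinearMap.range l := LinearMap.mem_range_self _ _
        rwa [hbot, Submodule.mem_bot] at this
      rw [hl] at this
      simp only [ContinuousLinearMap.coe_coe, innerSL_apply_apply] at this
      exact hw (inner_self_eq_zero.1 this)
    have hle1 : Module.finrank ℝ (LinearMap.range l) ≤ 1 := by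
      simpa using Submodule.finrank_le (LinearMap.range l)
    have hge1 : 1 ≤ Module.finrank ℝ (LinearMap.range l) := by
      rw [Nat.one_le_iff_ne_zero]
      intro h0
      exact h1 (Submodule.finrank_eq_zero.1 h0)
    omega
  have hker : Module.finrank ℝ (LinearMap.ker l) + 1 = Module.finrank ℝ E := by
    have := LinearMap.finrank_range_add_finrank_ker l
    omega
  have := Submodule.finrank_mono hd
  unfold polyDim
  omega

lemma exists_outside {s : Finset E} (hspan : affineSpan ℝ (s : Set E) = ⊤) {A : Set E}
    (hA : polyDim A < Module.finrank ℝ E) : ∃ z ∈ s, z ∉ affineSpan ℝ A := by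
  by_contra h
  push_neg at h
  have : affineSpan ℝ (s : Set E) ≤ affineSpan ℝ A := affineSpan_le.2 h
  rw [hspan, top_le_iff] at this
  rw [polyDim, this, AffineSubspace.direction_top, finrank_top] at hA
  exact lt_irrefl _ hA

lemma exists_perp {W : Submodule ℝ E} [CompleteSpace E] (hW : W ≠ ⊤) :
    ∃ n : E, n ≠ 0 ∧ ∀ x ∈ W, ⟪n, x⟫ = 0 := by
  have hbot : Wᗮ ≠ ⊥ := fun h => hW (Submodule.orthogonal_eq_bot_iff.1 h)
  obtain ⟨n, hnW, hn0⟩ := Submodule.exists_mem_ne_zero_of_ne_bot hbot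
  exact ⟨n, hn0, fun x hx => by
    rw [real_inner_comm]
    exact Submodule.inner_right_of_mem_orthogonal hx hnW⟩

end Geometry
section Geometry2

open Set

variable {E : Type*} [NormedAddCommGroup E] [InnerProductSpace ℝ E] [FiniteDimensional ℝ E]

local notation "⟪" x ", " y "⟫" => @inner ℝ _ _ x y

lemma mem_Fface_self {s : Finset E} {y w : E} (hy : y ∈ convexHull ℝ (s : Set E)) :
    y ∈ Fface s y w := ⟨hy, by simp⟩

lemma rotate (s : Finset E) (y v w n : E) (hy : y ∈ convexHull ℝ (s : Set E))
    (hw1 : ∀ z ∈ s, ⟪w, z - y⟫ ≤ 0) (hw2 : 0 < ⟪w, v - y⟫)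
    (hnF : ∀ x ∈ Fface s y w, ⟪n, x - y⟫ = 0)
    (hnv : 0 ≤ ⟪n, v - y⟫) (hex : ∃ z ∈ s, 0 < ⟪n, z - y⟫) :
    ∃ w', (∀ z ∈ s, ⟪w', z - y⟫ ≤ 0) ∧ 0 < ⟪w', v - y⟫ ∧
      polyDim (Fface s y w) < polyDim (Fface s y w') := by
  classical
  set T := s.filter (fun z => 0 < ⟪n, z - y⟫) with hT
  obtain ⟨z₁, hz₁s, hz₁⟩ := hex
  have hTne : T.Nonempty := ⟨z₁, Finset.mem_filter.2 ⟨hz₁s, hz₁⟩⟩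
  obtain ⟨z₀, hz₀T, hmin⟩ := T.exists_min_image (fun z => -⟪w, z - y⟫ / ⟪n, z - y⟫) hTne
  have hz₀s : z₀ ∈ s := (Finset.mem_filter.1 hz₀T).1
  have hz₀n : 0 < ⟪n, z₀ - y⟫ := (Finset.mem_filter.1 hz₀T).2
  have hTneg : ∀ z ∈ T, ⟪w, z - y⟫ < 0 := by
    intro z hzT
    obtain ⟨hzs, hzn⟩ := Finset.mem_filter.1 hzT
    rcases lt_or_eq_of_le (hw1 z hzs) with h | h
    · exact h
    · exact absurd (hnF z ⟨subset_convexHull ℝ _ hzs, h⟩) (ne_of_gt hzn)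
  set θ := -⟪w, z₀ - y⟫ / ⟪n, z₀ - y⟫ with hθ
  have hθpos : 0 < θ := div_pos (by linarith [hTneg z₀ hz₀T]) hz₀n
  refine ⟨w + θ • n, ?_, ?_, ?_⟩
  · intro z hzs
    rw [inner_add_left, real_inner_smul_left]
    by_cases hzT : z ∈ T
    · have h1 := hmin z hzT
      have hzn := (Finset.mem_filter.1 hzT).2
      have h2 : θ * ⟪n, z - y⟫ ≤ -⟪w, z - y⟫ := by
        rw [← le_div_iff₀ hzn]
        exact h1
      linarith
    · have hzn : ⟪n, z - y⟫ ≤ 0 := by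
        by_contra h; push_neg at h; exact hzT (Finset.mem_filter.2 ⟨hzs, h⟩)
      have := hw1 z hzs
      nlinarith
  · rw [inner_add_left, real_inner_smul_left]
    nlinarith
  · apply polyDim_lt (y := y) (z := z₀)
    · rintro x ⟨hxP, hxw⟩
      have hxw' : ⟪w, x - y⟫ = 0 := hxw
      have hxn : ⟪n, x - y⟫ = 0 := hnF x ⟨hxP, hxw⟩
      refine ⟨hxP, ?_⟩
      show ⟪w + θ • n, x - y⟫ = 0
      rw [inner_add_left, real_inner_smul_left, hxw', hxn]; ring
    · exact mem_Fface_self hy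
    · refine ⟨subset_convexHull ℝ _ hz₀s, ?_⟩
      show ⟪w + θ • n, z₀ - y⟫ = 0
      rw [inner_add_left, real_inner_smul_left, hθ, div_mul_cancel₀ _ hz₀n.ne']
      ring
    · intro hmem
      have := inner_eq_on_affineSpan hnF z₀ hmem
      linarith

lemma enlarge_step {s : Finset E} (hspan : affineSpan ℝ (s : Set E) = ⊤) (y v w : E)
    (hy : y ∈ convexHull ℝ (s : Set E))
    (hw1 : ∀ z ∈ s, ⟪w, z - y⟫ ≤ 0) (hw2 : 0 < ⟪w, v - y⟫)
    (hdim : polyDim (Fface s y w) + 1 < Module.finrank ℝ E) :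
    ∃ w', (∀ z ∈ s, ⟪w', z - y⟫ ≤ 0) ∧ 0 < ⟪w', v - y⟫ ∧
      polyDim (Fface s y w) < polyDim (Fface s y w') := by
  classical
  set F := Fface s y w with hF
  have hyF : y ∈ F := mem_Fface_self hy
  obtain ⟨z₀, hz₀s, hz₀⟩ := exists_outside hspan (show polyDim F < Module.finrank ℝ E by omega)
  set W := (affineSpan ℝ (insert z₀ F)).direction with hW
  have hWrank : Module.finrank ℝ W ≤ polyDim F + 1 := by
    rw [hW, ← affineSpan_insert_affineSpan,
      AffineSubspace.direction_affineSpan_insert (mem_affineSpan ℝ hyF)]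
    refine le_trans (Submodule.finrank_add_le_finrank_add_finrank _ _) ?_
    have h1 : Module.finrank ℝ (Submodule.span ℝ {z₀ -ᵥ y}) ≤ 1 := by
      rw [vsub_eq_sub]
      rcases eq_or_ne (z₀ - y) 0 with h | h
      · rw [h, Submodule.span_zero_singleton]
        simp
      · rw [finrank_span_singleton h]
    have h2 : Module.finrank ℝ (affineSpan ℝ F).direction = polyDim F := rfl
    omega
  have hWne : W ≠ ⊤ := by
    intro h
    rw [h, finrank_top] at hWrank
    omega
  obtain ⟨n₀, hn₀0, hn₀perp⟩ := exists_perp hWne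
  have hvan₀ : ∀ x ∈ insert z₀ F, ⟪n₀, x - y⟫ = 0 := by
    intro x hx
    have hxW : x -ᵥ y ∈ W :=
      AffineSubspace.vsub_mem_direction (subset_affineSpan ℝ _ hx)
        (subset_affineSpan ℝ _ (mem_insert_of_mem _ hyF))
    simpa [vsub_eq_sub] using hn₀perp _ hxW
  set n : E := if 0 ≤ ⟪n₀, v - y⟫ then n₀ else -n₀ with hn
  have hnv : 0 ≤ ⟪n, v - y⟫ := by
    rw [hn]; split
    · assumption
    · rw [inner_neg_left]; linarith [lt_of_not_ge ‹¬0 ≤ ⟪n₀, v - y⟫›]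
  have hvan : ∀ x ∈ insert z₀ F, ⟪n, x - y⟫ = 0 := by
    intro x hx
    rw [hn]; split
    · exact hvan₀ x hx
    · rw [inner_neg_left, hvan₀ x hx, neg_zero]
  have hn0 : n ≠ 0 := by
    rw [hn]; split
    · exact hn₀0
    · simpa using hn₀0
  by_cases hexA : ∃ z ∈ s, 0 < ⟪n, z - y⟫
  · exact rotate s y v w n hy hw1 hw2 (fun x hx => hvan x (mem_insert_of_mem _ hx)) hnv hexA
  · push_neg at hexA
    by_cases hnvpos : 0 < ⟪n, v - y⟫
    · refine ⟨n, hexA, hnvpos, ?_⟩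
      apply polyDim_lt (y := y) (z := z₀)
      · rintro x ⟨hxP, hxw⟩
        exact ⟨hxP, hvan x (mem_insert_of_mem _ ⟨hxP, hxw⟩)⟩
      · exact hyF
      · exact ⟨subset_convexHull ℝ _ hz₀s, hvan z₀ (Set.mem_insert _ _)⟩
      · exact hz₀
    · have h0 : ⟪n, v - y⟫ = 0 := le_antisymm (not_lt.1 hnvpos) hnv
      have hex2 : ∃ z ∈ s, 0 < ⟪-n, z - y⟫ := by
        by_contra h
        push_neg at h
        have hall : ∀ z ∈ s, ⟪n, z - y⟫ = 0 := by
          intro z hz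
          have h1 := hexA z hz
          have h2 := h z hz
          rw [inner_neg_left] at h2
          linarith
        have hcontra := inner_eq_on_affineSpan (A := (s : Set E)) hall (n + y)
          (by rw [hspan]; exact AffineSubspace.mem_top ℝ E _)
        simp only [add_sub_cancel_right] at hcontra
        exact hn0 (inner_self_eq_zero.1 hcontra)
      refine rotate s y v w (-n) hy hw1 hw2 ?_ (by rw [inner_neg_left, h0, neg_zero]) hex2
      intro x hx
      rw [inner_neg_left, hvan x (mem_insert_of_mem _ hx), neg_zero]

lemma exists_facet_w {s : Finset E} (hspan : affineSpan ℝ (s : Set E) = ⊤) (y v : E)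
    (hy : y ∈ convexHull ℝ (s : Set E)) :
    ∀ (k : ℕ) (w : E), (∀ z ∈ s, ⟪w, z - y⟫ ≤ 0) → 0 < ⟪w, v - y⟫ →
      Module.finrank ℝ E ≤ polyDim (Fface s y w) + 1 + k →
      ∃ w', (∀ z ∈ s, ⟪w', z - y⟫ ≤ 0) ∧ 0 < ⟪w', v - y⟫ ∧
        polyDim (Fface s y w') + 1 = Module.finrank ℝ E := by
  intro k
  induction k with
  | zero =>
    intro w h1 h2 h3
    have hw0 : w ≠ 0 := by
      intro h; rw [h, inner_zero_left] at h2; exact lt_irrefl _ h2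
    have := polyDim_add_one_le hw0 (F := Fface s y w) (y := y) (fun x hx => hx.2)
    exact ⟨w, h1, h2, by omega⟩
  | succ k ih =>
    intro w h1 h2 h3
    by_cases hc : Module.finrank ℝ E ≤ polyDim (Fface s y w) + 1
    · have hw0 : w ≠ 0 := by
        intro h; rw [h, inner_zero_left] at h2; exact lt_irrefl _ h2
      have := polyDim_add_one_le hw0 (F := Fface s y w) (y := y) (fun x hx => hx.2)
      exact ⟨w, h1, h2, by omega⟩
    · push_neg at hc
      obtain ⟨w', h1', h2', hlt⟩ := enlarge_step hspan y v w hy h1 h2 hc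
      exact ih w' h1' h2' (by omega)

end Geometry2
section Geometry3

open Set

variable {E : Type*} [NormedAddCommGroup E] [InnerProductSpace ℝ E] [FiniteDimensional ℝ E]

local notation "⟪" x ", " y "⟫" => @inner ℝ _ _ x y

lemma exists_visible_point {s : Finset E} (hspan : affineSpan ℝ (s : Set E) = ⊤)
    {p v x : E} (hp : p ∈ convexHull ℝ (s : Set E)) (hv : v ∉ convexHull ℝ (s : Set E))
    (hxseg : x ∈ segment ℝ v p) (hxP : x ∉ convexHull ℝ (s : Set E)) :
    ∃ (w y : E), y ∈ Fface s y w ∧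
      (∀ z ∈ s, ⟪w, z - y⟫ ≤ 0) ∧ 0 < ⟪w, v - y⟫ ∧
      polyDim (Fface s y w) + 1 = Module.finrank ℝ E ∧
      x ∈ convexHull ℝ (Fface s y w ∪ {v}) ∧ 0 < ⟪w, x - y⟫ := by
  classical
  set P := convexHull ℝ (s : Set E) with hP
  obtain ⟨a, b, ha, hb, hab, hxeq⟩ := hxseg
  set γ : ℝ → E := fun t => p + t • (v - p) with hγ
  have hγa : γ a = x := by
    rw [hγ]
    simp only
    rw [← hxeq]
    have hb' : b = 1 - a := by linarith
    rw [hb']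
    module
  set T : Set ℝ := {t | t ∈ Icc (0:ℝ) 1 ∧ γ t ∈ P} with hT
  have hPc : IsCompact P := s.finite_toSet.isCompact_convexHull ℝ
  have hγcont : Continuous γ := continuous_const.add (continuous_id.smul continuous_const)
  have hTcl : IsClosed T := isClosed_Icc.inter (hPc.isClosed.preimage hγcont)
  have hTc : IsCompact T := isCompact_Icc.of_isClosed_subset hTcl fun t ht => ht.1
  have hT0 : (0:ℝ) ∈ T := ⟨⟨le_rfl, zero_le_one⟩, by simpa [hγ] using hp⟩
  set t₀ : ℝ := sSup T with ht₀
  have ht₀T : t₀ ∈ T := hTc.sSup_mem ⟨0, hT0⟩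
  set y : E := γ t₀ with hy
  have hyP : y ∈ P := ht₀T.2
  have ht₀I : t₀ ∈ Icc (0:ℝ) 1 := ht₀T.1
  have hγ1 : γ 1 = v := by rw [hγ]; simp
  have ht₀1 : t₀ < 1 := by
    rcases lt_or_eq_of_le ht₀I.2 with h | h
    · exact h
    · exact absurd (by rw [← hγ1, ← h]; exact hyP) hv
  have hbey : ∀ t, t₀ < t → t ≤ 1 → γ t ∉ P := by
    intro t h1 h2 hin
    exact absurd (le_csSup hTc.bddAbove ⟨⟨by linarith [ht₀I.1], h2⟩, hin⟩) (not_le.2 h1)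
  have ha1 : a ≤ 1 := by linarith
  have hat₀ : t₀ < a := by
    by_contra h
    push_neg at h
    rcases eq_or_lt_of_le ht₀I.1 with h0 | h0
    · -- t₀ = 0, so a = 0 and x = p ∈ P
      have ha0 : a = 0 := le_antisymm (by linarith [h, h0]) ha
      rw [← hγa, ha0] at hxP
      exact hxP (by simpa [hγ] using hp)
    · -- 0 < t₀ : γ a ∈ segment p y ⊆ P
      set μ : ℝ := a / t₀ with hμ
      have hμ0 : 0 ≤ μ := div_nonneg ha h0.le
      have hμ1 : μ ≤ 1 := div_le_one_of_le₀ h h0.le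
      have hμt : μ * t₀ = a := div_mul_cancel₀ _ h0.ne'
      have hseg : x ∈ segment ℝ p y := by
        refine ⟨1 - μ, μ, by linarith, hμ0, by ring, ?_⟩
        rw [hy, hγ, ← hγa]
        simp only
        have : (1 - μ) • p + μ • (p + t₀ • (v - p)) = p + (μ * t₀) • (v - p) := by module
        rw [this, hμt]
      exact hxP ((convex_convexHull ℝ _).segment_subset hp hyP hseg)
  have hu : ∀ ε : ℝ, 0 < ε → ε ≤ 1 - t₀ → y + ε • (v - p) ∉ P := by
    intro ε hε1 hε2
    have : y + ε • (v - p) = γ (t₀ + ε) := by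
      rw [hy, hγ]; simp only; rw [add_smul]; abel
    rw [this]
    exact hbey _ (by linarith) (by linarith)
  -- the direction `v - p` is not in the cone generated by `s - y`
  have hucone : (v - p) ∉ coneHull (s.image (· - y)) := by
    rintro ⟨c, hc, hcsum⟩
    have hinj : Function.Injective (· - y) := fun a b h => by simpa using h
    rw [Finset.sum_image (fun a _ b _ h => hinj h)] at hcsum
    set m : ℝ := ∑ z ∈ s, c (z - y) with hm
    have hm0 : 0 ≤ m := Finset.sum_nonneg fun z _ => hc _
    set ε : ℝ := min (1 - t₀) (1 / (m + 1)) with hε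
    have hε0 : 0 < ε := lt_min (by linarith) (by positivity)
    have hεm : ε * m ≤ 1 := by
      have h1 : ε ≤ 1 / (m + 1) := min_le_right _ _
      have h2 : ε * m ≤ (1 / (m + 1)) * m := mul_le_mul_of_nonneg_right h1 hm0
      have h3 : (1 / (m + 1)) * m ≤ 1 := by
        rw [div_mul_eq_mul_div, div_le_one (by linarith)]
        linarith
      linarith
    -- y + ε • (v - p) is a convex combination of points of s
    have hyP' := hyP
    rw [hP, Finset.convexHull_eq] at hyP'
    obtain ⟨β, hβ0, hβ1, hβy⟩ := hyP'
    rw [Finset.centerMass_eq_of_sum_1 _ _ hβ1] at hβy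
    simp only [id_eq] at hβy
    set δ : E → ℝ := fun z => ε * c (z - y) + (1 - ε * m) * β z with hδ
    have hδ0 : ∀ z ∈ s, 0 ≤ δ z := fun z hz =>
      add_nonneg (mul_nonneg hε0.le (hc _)) (mul_nonneg (by linarith) (hβ0 z hz))
    have hδ1 : ∑ z ∈ s, δ z = 1 := by
      rw [hδ]
      simp only
      rw [Finset.sum_add_distrib, ← Finset.mul_sum, ← Finset.mul_sum, ← hm, hβ1]
      ring
    have hsplit : ∑ z ∈ s, c (z - y) • z = (v - p) + m • y := by
      have h1 : ∑ z ∈ s, c (z - y) • (z - y) = (∑ z ∈ s, c (z - y) • z) - m • y := by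
        simp only [smul_sub]
        rw [Finset.sum_sub_distrib, ← Finset.sum_smul, ← hm]
      rw [h1] at hcsum
      exact sub_eq_iff_eq_add.1 hcsum
    have hδsum : ∑ z ∈ s, δ z • z = y + ε • (v - p) := by
      rw [hδ]
      simp only [add_smul, mul_smul]
      rw [Finset.sum_add_distrib, ← Finset.smul_sum, ← Finset.smul_sum, hsplit, hβy]
      module
    have hmem : y + ε • (v - p) ∈ P := by
      rw [hP, Finset.convexHull_eq]
      exact ⟨δ, hδ0, hδ1, by
        rw [Finset.centerMass_eq_of_sum_1 _ _ hδ1]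
        simpa only [id_eq] using hδsum⟩
    exact hu ε hε0 (min_le_left _ _) hmem
  obtain ⟨w₁, hw₁z, hw₁u⟩ := sep_cone hucone
  have hw₁s : ∀ z ∈ s, ⟪w₁, z - y⟫ ≤ 0 := fun z hz =>
    hw₁z _ (Finset.mem_image_of_mem _ hz)
  have hvy : v - y = (1 - t₀) • (v - p) := by
    rw [hy, hγ]
    simp only
    module
  have hw₁v : 0 < ⟪w₁, v - y⟫ := by
    rw [hvy, real_inner_smul_right]
    exact mul_pos (by linarith) hw₁u
  obtain ⟨w, hw1, hw2, hdim⟩ := exists_facet_w hspan y v hyP (Module.finrank ℝ E) w₁ hw₁s hw₁v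
    (by omega)
  set σ : ℝ := (a - t₀) / (1 - t₀) with hσ
  have hσ0 : 0 < σ := div_pos (by linarith) (by linarith)
  have hσ1 : σ ≤ 1 := (div_le_one (by linarith)).2 (by linarith)
  have hσt : σ * (1 - t₀) = a - t₀ := div_mul_cancel₀ _ (by linarith : (1:ℝ) - t₀ ≠ 0)
  have hxy : x = y + σ • (v - y) := by
    rw [← hγa, hvy, hy, hγ]
    simp only
    rw [smul_smul, hσt]
    module
  refine ⟨w, y, mem_Fface_self hyP, hw1, hw2, hdim, ?_, ?_⟩
  · have hseg2 : x ∈ segment ℝ y v :=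
      ⟨1 - σ, σ, by linarith, hσ0.le, by ring, by rw [hxy]; module⟩
    refine (convex_convexHull ℝ (Fface s y w ∪ {v})).segment_subset ?_ ?_ hseg2
    · exact subset_convexHull ℝ _ (mem_union_left _ (mem_Fface_self hyP))
    · exact subset_convexHull ℝ _ (mem_union_right _ rfl)
  · rw [hxy, add_sub_cancel_left, real_inner_smul_right]
    exact mul_pos hσ0 hw2

end Geometry3
section Geometry4

open Set

variable {E : Type*} [NormedAddCommGroup E] [InnerProductSpace ℝ E] [FiniteDimensional ℝ E]

local notation "⟪" x ", " y "⟫" => @inner ℝ _ _ x y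

lemma affine_nonneg_on_hull {A : Set E} {φ : E →ᵃ[ℝ] ℝ} (h : ∀ x ∈ A, 0 ≤ φ x) :
    ∀ x ∈ convexHull ℝ A, 0 ≤ φ x := by
  intro x hx
  have hconv : Convex ℝ {x : E | 0 ≤ φ x} := by
    have he : {x : E | 0 ≤ φ x} = φ ⁻¹' (Ici 0) := rfl
    rw [he]
    exact Convex.affine_preimage _ (convex_Ici 0)
  exact convexHull_min h hconv hx

lemma span_top_of_polyDim {A : Set E} (hA : A.Nonempty)
    (h : polyDim A = Module.finrank ℝ E) : affineSpan ℝ A = ⊤ := by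
  have hd : (affineSpan ℝ A).direction = ⊤ := Submodule.eq_top_of_finrank_eq h
  exact (AffineSubspace.direction_eq_top_iff_of_nonempty
    ((affineSpan_nonempty (k := ℝ)).2 hA)).1 hd

lemma exposed_face_eq_hull (s : Finset E) {F : Set E}
    (hF : IsExposed ℝ (convexHull ℝ (s : Set E)) F) :
    ∃ t : Finset E, F = convexHull ℝ (t : Set E) := by
  classical
  rcases F.eq_empty_or_nonempty with h | hne
  · exact ⟨∅, by simp [h]⟩
  obtain ⟨l, hl⟩ := hF hne
  have hsne : s.Nonempty := by
    rcases hne with ⟨x, hx⟩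
    rw [hl] at hx
    rcases (convexHull_nonempty_iff.1 ⟨x, hx.1⟩) with ⟨z, hz⟩
    exact ⟨z, hz⟩
  obtain ⟨zM, hzMs, hmax⟩ := s.exists_max_image l hsne
  set M : ℝ := l zM with hM
  set t : Finset E := s.filter (fun z => l z = M) with ht
  have hts : (t : Set E) ⊆ (s : Set E) := by
    intro z hz
    exact (Finset.mem_filter.1 hz).1
  have hub : ∀ x ∈ convexHull ℝ (s : Set E), l x ≤ M := by
    intro x hx
    have hconv : Convex ℝ {x : E | l x ≤ M} := by
      have he : {x : E | l x ≤ M} = (l.toLinearMap.toAffineMap) ⁻¹' (Iic M) := rfl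
      rw [he]
      exact Convex.affine_preimage _ (convex_Iic M)
    exact convexHull_min (fun z hz => hmax z hz) hconv hx
  refine ⟨t, ?_⟩
  rw [hl]
  ext x
  constructor
  · rintro ⟨hxP, hxmax⟩
    have hxM : l x = M := le_antisymm (hub x hxP) (hxmax zM (subset_convexHull ℝ _ hzMs))
    rw [Finset.convexHull_eq] at hxP
    obtain ⟨wgt, hw0, hw1, hwx⟩ := hxP
    rw [Finset.centerMass_eq_of_sum_1 _ _ hw1] at hwx
    simp only [id_eq] at hwx
    have hlx : ∑ z ∈ s, wgt z * l z = M := by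
      have : l x = ∑ z ∈ s, wgt z * l z := by
        rw [← hwx, map_sum]
        exact Finset.sum_congr rfl fun z _ => by rw [map_smul, smul_eq_mul]
      rw [← this, hxM]
    have hzero : ∀ z ∈ s, wgt z * (M - l z) = 0 := by
      have hsum : ∑ z ∈ s, wgt z * (M - l z) = 0 := by
        have : ∑ z ∈ s, wgt z * (M - l z) = M * (∑ z ∈ s, wgt z) - ∑ z ∈ s, wgt z * l z := by
          rw [Finset.mul_sum, ← Finset.sum_sub_distrib]
          exact Finset.sum_congr rfl fun z _ => by ring
        rw [this, hw1, hlx]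
        ring
      intro z hz
      exact (Finset.sum_eq_zero_iff_of_nonneg (fun z hz =>
        mul_nonneg (hw0 z hz) (by linarith [hmax z hz]))).1 hsum z hz
    have hsupp : ∀ z ∈ s, z ∉ t → wgt z = 0 := by
      intro z hz hzt
      have hne' : l z ≠ M := by
        intro h; exact hzt (Finset.mem_filter.2 ⟨hz, h⟩)
      have := hzero z hz
      rcases mul_eq_zero.1 this with h | h
      · exact h
      · exact absurd (by linarith : l z = M) hne'
    rw [Finset.convexHull_eq]
    refine ⟨wgt, fun z hz => hw0 z (Finset.mem_of_mem_filter z hz), ?_, ?_⟩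
    · rw [← hw1]
      exact Finset.sum_subset (Finset.filter_subset _ _) fun z hz hzt => hsupp z hz hzt
    · rw [Finset.centerMass_eq_of_sum_1]
      · simp only [id_eq]
        rw [← hwx]
        exact Finset.sum_subset (Finset.filter_subset _ _) fun z hz hzt => by
          show wgt z • z = 0
          rw [hsupp z hz hzt, zero_smul]
      · rw [← hw1]
        exact Finset.sum_subset (Finset.filter_subset _ _) fun z hz hzt => hsupp z hz hzt
  · intro hx
    have hxP : x ∈ convexHull ℝ (s : Set E) := convexHull_mono hts hx
    refine ⟨hxP, fun z hz => ?_⟩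
    have hxM : M ≤ l x := by
      have hconv : Convex ℝ {x : E | M ≤ l x} := by
        have he : {x : E | M ≤ l x} = (l.toLinearMap.toAffineMap) ⁻¹' (Ici M) := rfl
        rw [he]
        exact Convex.affine_preimage _ (convex_Ici M)
      exact convexHull_min (fun z hz => le_of_eq (Finset.mem_filter.1 hz).2.symm) hconv hx
    exact le_trans (hub z hz) hxM

end Geometry4
section Bridge

open Set

variable {E : Type*} [NormedAddCommGroup E] [InnerProductSpace ℝ E] [FiniteDimensional ℝ E]

local notation "⟪" x ", " y "⟫" => @inner ℝ _ _ x y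

lemma visibleFacet_of_w {s : Finset E} {y w v : E} (hy : y ∈ convexHull ℝ (s : Set E))
    (hw1 : ∀ z ∈ s, ⟪w, z - y⟫ ≤ 0) (hw2 : 0 < ⟪w, v - y⟫)
    (hdim : polyDim (Fface s y w) + 1 = Module.finrank ℝ E)
    (hPdim : polyDim (convexHull ℝ (s : Set E)) = Module.finrank ℝ E) :
    VisibleFacet (convexHull ℝ (s : Set E)) (Fface s y w) v := by
  have hle : ∀ x ∈ convexHull ℝ (s : Set E), ⟪w, x - y⟫ ≤ 0 := inner_le_on_hull hw1
  constructor
  · constructor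
    · intro hne
      refine ⟨innerSL ℝ w, ?_⟩
      ext xx
      constructor
      · rintro ⟨hxP, hxw⟩
        have hxw' : ⟪w, xx - y⟫ = 0 := hxw
        refine ⟨hxP, fun z hz => ?_⟩
        have h1 := hle z hz
        show (innerSL ℝ w) z ≤ (innerSL ℝ w) xx
        rw [innerSL_apply_apply, innerSL_apply_apply]
        rw [inner_sub_right] at h1 hxw'
        linarith
      · rintro ⟨hxP, hmax⟩
        refine ⟨hxP, ?_⟩
        have h1 : (innerSL ℝ w) y ≤ (innerSL ℝ w) xx := hmax y hy
        rw [innerSL_apply_apply, innerSL_apply_apply] at h1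
        have h2 := hle xx hxP
        show ⟪w, xx - y⟫ = 0
        rw [inner_sub_right] at h2 ⊢
        linarith
    · omega
  · exact ⟨innerAff w y, fun x hx => by simpa using hle x hx,
      fun x hx => by simpa using (hx.2 : ⟪w, x - y⟫ = 0), by simpa using hw2⟩

end Bridge
section Main

open Set Filter Topology

local notation "⟪" x ", " y "⟫" => @inner ℝ _ _ x y

theorem stmt11 {d : ℕ} (P : Set (EuclideanSpace ℝ (Fin d))) (v : EuclideanSpace ℝ (Fin d))
    (hP : IsPolytope P) (hfull : polyDim P = d) (hne : P.Nonempty) (hv : v ∉ P) :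
    convexHull ℝ (P ∪ {v}) \ P =
      (⋃ F ∈ {F : Set (EuclideanSpace ℝ (Fin d)) | VisibleFacet P F v},
        convexHull ℝ (F ∪ {v}) \ F) ∧
    (∀ F : Set (EuclideanSpace ℝ (Fin d)), VisibleFacet P F v →
      (∀ F' : Set (EuclideanSpace ℝ (Fin d)), VisibleFacet P F' v → F' = F) →
      closure (convexHull ℝ (P ∪ {v}) \ P) = convexHull ℝ (F ∪ {v})) := by
  classical
  obtain ⟨s, rfl⟩ := hP
  have hfin : Module.finrank ℝ (EuclideanSpace ℝ (Fin d)) = d := finrank_euclideanSpace_fin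
  have hPdim : polyDim (convexHull ℝ (s : Set (EuclideanSpace ℝ (Fin d)))) =
      Module.finrank ℝ (EuclideanSpace ℝ (Fin d)) := by rw [hfull, hfin]
  have hsne : (s : Set (EuclideanSpace ℝ (Fin d))).Nonempty := convexHull_nonempty_iff.1 hne
  have hspan : affineSpan ℝ (s : Set (EuclideanSpace ℝ (Fin d))) = ⊤ := by
    have := span_top_of_polyDim hne hPdim
    rwa [affineSpan_convexHull] at this
  have hpart1 : convexHull ℝ (convexHull ℝ (s : Set (EuclideanSpace ℝ (Fin d))) ∪ {v}) \
        convexHull ℝ (s : Set (EuclideanSpace ℝ (Fin d))) =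
      ⋃ F ∈ {F : Set (EuclideanSpace ℝ (Fin d)) |
          VisibleFacet (convexHull ℝ (s : Set (EuclideanSpace ℝ (Fin d)))) F v},
        convexHull ℝ (F ∪ {v}) \ F := by
    ext x
    simp only [mem_diff, mem_iUnion, mem_setOf_eq, exists_prop]
    constructor
    · rintro ⟨hxhull, hxP⟩
      rw [convexHull_convexHull_union_left, convexHull_union hsne (singleton_nonempty v),
        convexHull_singleton, mem_convexJoin] at hxhull
      obtain ⟨q, hq, b, hb, hxseg⟩ := hxhull
      rw [mem_singleton_iff] at hb
      subst hb
      rw [segment_symm] at hxseg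
      obtain ⟨w, y, hyF, hw1, hw2, hdim, hxF, hxpos⟩ :=
        exists_visible_point hspan hq hv hxseg hxP
      refine ⟨Fface s y w, visibleFacet_of_w hyF.1 hw1 hw2 hdim hPdim, hxF, ?_⟩
      intro hxIn
      have h0 : ⟪w, x - y⟫ = 0 := hxIn.2
      linarith
    · rintro ⟨F, hF, hxF, hxnF⟩
      obtain ⟨⟨hFexp, hFdimeq⟩, φ, hφP, hφF, hφv⟩ := hF
      have hFP : F ⊆ convexHull ℝ (s : Set (EuclideanSpace ℝ (Fin d))) := hFexp.subset
      refine ⟨convexHull_mono (union_subset_union_left _ hFP) hxF, ?_⟩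
      rcases F.eq_empty_or_nonempty with hFe | hFne
      · subst hFe
        rw [empty_union, convexHull_singleton, mem_singleton_iff] at hxF
        subst hxF
        exact hv
      · have hFconv : Convex ℝ F := hFexp.convex (convex_convexHull ℝ _)
        rw [convexHull_union hFne (singleton_nonempty v), hFconv.convexHull_eq,
          convexHull_singleton, mem_convexJoin] at hxF
        obtain ⟨q, hqF, u, hu, hseg⟩ := hxF
        rw [mem_singleton_iff] at hu
        rw [hu] at hseg
        obtain ⟨a, b, ha, hb, hab, hxe⟩ := hseg
        intro hxPmem
        have hφx : φ x = b * φ v := by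
          rw [← hxe, Convex.combo_affine_apply hab, hφF q hqF]
          simp
        rcases eq_or_lt_of_le hb with hb0 | hb0
        · have ha1 : a = 1 := by linarith
          have hxq : x = q := by rw [← hxe, ← hb0, ha1]; simp
          exact hxnF (hxq ▸ hqF)
        · have hxpos : 0 < φ x := by rw [hφx]; exact mul_pos hb0 hφv
          linarith [hφP x hxPmem]
  refine ⟨hpart1, ?_⟩
  intro F hF huniq
  have hsetF : {F' : Set (EuclideanSpace ℝ (Fin d)) |
      VisibleFacet (convexHull ℝ (s : Set (EuclideanSpace ℝ (Fin d)))) F' v} = {F} :=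
    eq_singleton_iff_unique_mem.2 ⟨hF, huniq⟩
  rw [hpart1, hsetF]
  have hbU : ⋃ F' ∈ ({F} : Set (Set (EuclideanSpace ℝ (Fin d)))),
      convexHull ℝ (F' ∪ {v}) \ F' = convexHull ℝ (F ∪ {v}) \ F := by
    simp
  rw [hbU]
  obtain ⟨⟨hFexp, hFdimeq⟩, φ, hφP, hφF, hφv⟩ := hF
  obtain ⟨t, htF⟩ := exposed_face_eq_hull s hFexp
  have hclosed : IsClosed (convexHull ℝ (F ∪ {v})) := by
    rw [htF, convexHull_convexHull_union_left]
    exact (t.finite_toSet.union (finite_singleton v)).isClosed_convexHull ℝ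
  refine Subset.antisymm (closure_minimal diff_subset hclosed) ?_
  intro x hx
  have hφx0 : 0 ≤ φ x := by
    refine affine_nonneg_on_hull (A := F ∪ {v}) (φ := φ) (fun z hz => ?_) x hx
    rcases hz with h | h
    · exact (hφF z h).ge
    · rw [mem_singleton_iff] at h
      rw [h]
      exact hφv.le
  have htend : Filter.Tendsto (fun k : ℕ => x + (1 / ((k : ℝ) + 1)) • (v - x))
      Filter.atTop (nhds x) := by
    have h1 : Filter.Tendsto (fun k : ℕ => (1 / ((k : ℝ) + 1))) Filter.atTop (nhds 0) :=
      tendsto_one_div_add_atTop_nhds_zero_nat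
    have h2 := h1.smul_const (v - x)
    rw [zero_smul] at h2
    simpa using tendsto_const_nhds.add h2
  refine mem_closure_of_tendsto htend (Filter.Eventually.of_forall fun k => ?_)
  have hk0 : 0 < (1 / ((k : ℝ) + 1)) := by positivity
  have hk1 : (1 / ((k : ℝ) + 1)) ≤ 1 := by
    rw [div_le_one (by positivity)]
    linarith [Nat.cast_nonneg (α := ℝ) k]
  have hφval : φ (x + (1 / ((k : ℝ) + 1)) • (v - x)) =
      (1 / ((k : ℝ) + 1)) * (φ v - φ x) + φ x := by
    have e1 : x + (1 / ((k : ℝ) + 1)) • (v - x) = (1 / ((k : ℝ) + 1)) • (v - x) +ᵥ x := by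
      rw [vadd_eq_add, add_comm]
    rw [e1, AffineMap.map_vadd, vadd_eq_add, map_smul, smul_eq_mul]
    have e2 : φ.linear (v - x) = φ v - φ x := by
      have h3 := φ.linearMap_vsub v x
      rwa [vsub_eq_sub, vsub_eq_sub] at h3
    rw [e2]
  constructor
  · exact (convex_convexHull ℝ _).add_smul_sub_mem hx
      (subset_convexHull ℝ _ (mem_union_right _ rfl)) ⟨hk0.le, hk1⟩
  · intro hmem
    have hφpos : 0 < φ (x + (1 / ((k : ℝ) + 1)) • (v - x)) := by
      rw [hφval]
      nlinarith
    rw [hφF _ hmem] at hφpos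
    exact lt_irrefl _ hφpos

end Main
end
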